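/- arXiv:1206.0694 — 10 statements merged into one kernel-verified Lean document; each statement's English description precedes it below -/
import Mathlib

section
/- Let Ω be a locally compact Hausdorff space and let 𝒞 = C₀(Ω, ℂ) be the Banach algebra of continuous complex-valued functions on Ω vanishing at infinity (with pointwise operations and the sup norm). Then every derivation δ : 𝒞 → 𝒞 (not assumed continuous) is identically zero. -/
open scoped ZeroAtInfty

open Filter Set

/-- Compose an element of `C₀(Ω, ℂ)` with a continuous map `ℂ → ℂ` fixing `0`. -/
noncomputable def C0comp {Ω : Type*} [TopologicalSpace Ω] (φ : ℂ → ℂ) (hφ : Continuous φ)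
    (h0 : φ 0 = 0) (f : C₀(Ω, ℂ)) : C₀(Ω, ℂ) where
  toFun := φ ∘ f
  continuous_toFun := hφ.comp (map_continuous f)
  zero_at_infty' := by
    have := (hφ.tendsto 0).comp (ZeroAtInftyContinuousMapClass.zero_at_infty f)
    simpa [h0] using this

@[simp] lemma C0comp_apply {Ω : Type*} [TopologicalSpace Ω] (φ : ℂ → ℂ) (hφ : Continuous φ)
    (h0 : φ 0 = 0) (f : C₀(Ω, ℂ)) (x : Ω) : C0comp φ hφ h0 f x = φ (f x) := rfl

/-- There are no nonzero derivations on the Banach algebra `C₀(Ω, ℂ)` of continuous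
complex-valued functions vanishing at infinity on a locally compact Hausdorff space `Ω`. -/
theorem no_derivations_on_C0 (Ω : Type*) [TopologicalSpace Ω] [LocallyCompactSpace Ω]
    [T2Space Ω] (δ : C₀(Ω, ℂ) →ₗ[ℂ] C₀(Ω, ℂ))
    (hδ : ∀ f g : C₀(Ω, ℂ), δ (f * g) = δ f * g + f * δ g) :
    δ = 0 := by
  classical
  -- Step 1: if `f x = 0` then `δ f x = 0`.
  have key : ∀ (f : C₀(Ω, ℂ)) (x : Ω), f x = 0 → δ f x = 0 := by
    intro f x hfx
    -- four square-root functions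
    have hcont : ∀ c : ℂ → ℝ, Continuous c →
        Continuous fun z : ℂ => (Real.sqrt (max (c z) 0) : ℂ) := fun c hc =>
      Complex.continuous_ofReal.comp (Real.continuous_sqrt.comp (hc.max continuous_const))
    set s₁ := C0comp _ (hcont _ Complex.continuous_re) (by simp) f with hs₁
    set s₂ := C0comp _ (hcont _ Complex.continuous_re.neg) (by simp) f with hs₂
    set s₃ := C0comp _ (hcont _ Complex.continuous_im) (by simp) f with hs₃
    set s₄ := C0comp _ (hcont _ Complex.continuous_im.neg) (by simp) f with hs₄
    have sq : ∀ a : ℝ, (Real.sqrt (max a 0) : ℂ) * (Real.sqrt (max a 0) : ℂ) = (max a 0 : ℝ) := by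
      intro a
      rw [← Complex.ofReal_mul, Real.mul_self_sqrt (le_max_right _ _)]
    have hfactor : f = (s₁ * s₁ - s₂ * s₂) + Complex.I • (s₃ * s₃ - s₄ * s₄) := by
      ext ω
      simp only [ZeroAtInftyContinuousMap.coe_add, ZeroAtInftyContinuousMap.coe_sub,
        ZeroAtInftyContinuousMap.coe_mul, ZeroAtInftyContinuousMap.coe_smul, Pi.add_apply,
        Pi.sub_apply, Pi.mul_apply, Pi.smul_apply, smul_eq_mul, hs₁, hs₂, hs₃, hs₄, C0comp_apply]
      rw [sq, sq, sq, sq]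
      simp only [Pi.neg_apply]
      have hre : (max (f ω).re 0 : ℝ) - (max (-(f ω).re) 0 : ℝ) = (f ω).re := by
        rcases le_total (f ω).re 0 with h | h
        · rw [max_eq_right h, max_eq_left (by linarith)]; ring
        · rw [max_eq_left h, max_eq_right (by linarith)]; ring
      have him : (max (f ω).im 0 : ℝ) - (max (-(f ω).im) 0 : ℝ) = (f ω).im := by
        rcases le_total (f ω).im 0 with h | h
        · rw [max_eq_right h, max_eq_left (by linarith)]; ring
        · rw [max_eq_left h, max_eq_right (by linarith)]; ring
      rw [show ((max (f ω).re 0 : ℝ) : ℂ) - ((max (-(f ω).re) 0 : ℝ) : ℂ)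
            = ((f ω).re : ℂ) by rw [← Complex.ofReal_sub, hre],
          show ((max (f ω).im 0 : ℝ) : ℂ) - ((max (-(f ω).im) 0 : ℝ) : ℂ)
            = ((f ω).im : ℂ) by rw [← Complex.ofReal_sub, him],
          mul_comm Complex.I]
      exact (Complex.re_add_im (f ω)).symm
    -- each sᵢ vanishes at x
    have hs1x : s₁ x = 0 := by simp [hs₁, hfx]
    have hs2x : s₂ x = 0 := by simp [hs₂, hfx]
    have hs3x : s₃ x = 0 := by simp [hs₃, hfx]
    have hs4x : s₄ x = 0 := by simp [hs₄, hfx]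
    have hmul : ∀ s : C₀(Ω, ℂ), s x = 0 → δ (s * s) x = 0 := by
      intro s hs
      rw [hδ]
      simp [hs]
    rw [hfactor, map_add, map_sub, map_smul, map_sub]
    simp only [ZeroAtInftyContinuousMap.coe_add, ZeroAtInftyContinuousMap.coe_sub,
      ZeroAtInftyContinuousMap.coe_smul, Pi.add_apply, Pi.sub_apply, Pi.smul_apply, smul_eq_mul]
    rw [hmul s₁ hs1x, hmul s₂ hs2x, hmul s₃ hs3x, hmul s₄ hs4x]
    ring
  -- Step 2: bump function at `x` in `C₀`
  have bump : ∀ x : Ω, ∃ g : C₀(Ω, ℂ), g x = 1 := by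
    intro x
    obtain ⟨g₀, hg1, -, hgc, -⟩ :=
      exists_continuous_one_zero_of_isCompact (isCompact_singleton (x := x))
        isClosed_empty (disjoint_empty _)
    refine ⟨⟨⟨fun ω => (g₀ ω : ℂ), Complex.continuous_ofReal.comp g₀.continuous⟩, ?_⟩, ?_⟩
    · exact HasCompactSupport.is_zero_at_infty
        (hgc.comp_left (g := fun r : ℝ => (r : ℂ)) (by simp))
    · have := hg1 (mem_singleton x)
      simp only [ZeroAtInftyContinuousMap.coe_mk]
      rw [show g₀ x = 1 from this]
      norm_num
  -- Step 3: δ g x = 0 for the bump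
  ext f x
  obtain ⟨g, hgx⟩ := bump x
  have hgg : (g * g - g) x = 0 := by
    simp [hgx]
  have h1 : δ (g * g - g) x = 0 := key _ x hgg
  rw [map_sub] at h1
  have h2 : δ (g * g) x = 2 * δ g x := by
    rw [hδ]
    simp [hgx]
    ring
  have hdgx : δ g x = 0 := by
    have h3 : δ (g * g) x - δ g x = 0 := by
      simpa [ZeroAtInftyContinuousMap.coe_sub, Pi.sub_apply] using h1
    rw [h2] at h3
    linear_combination h3
  have hfx : δ (f - f x • g) x = 0 := key _ x (by simp [hgx])
  rw [map_sub, map_smul] at hfx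
  have : δ f x - f x * δ g x = 0 := by
    simpa [ZeroAtInftyContinuousMap.coe_sub, ZeroAtInftyContinuousMap.coe_smul,
      Pi.sub_apply, Pi.smul_apply, smul_eq_mul] using hfx
  simp only [LinearMap.zero_apply, ZeroAtInftyContinuousMap.coe_zero, Pi.zero_apply]
  rw [hdgx, mul_zero, sub_zero] at this
  exact this
end

section
/- (Singer–Wermer) Let A be a commutative semisimple complex Banach algebra. Then every continuous derivation δ : A → A is identically zero. -/
set_option synthInstance.maxHeartbeats 1000000
set_option maxHeartbeats 1000000
open NormedSpace

section aux
variable {A : Type*} [NormedCommRing A] [NormedAlgebra ℂ A] [CompleteSpace A]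

theorem sw_commute (x y : A →L[ℂ] A) (h : Commute x y) (a b : ℂ) : Commute (a • x) (b • y) := by
  have hxy := DFunLike.congr_fun h.eq
  simp only [ContinuousLinearMap.mul_apply] at hxy
  show _ = _
  ext v
  simp only [ContinuousLinearMap.mul_apply, ContinuousLinearMap.smul_apply, map_smul]
  rw [smul_comm a b, hxy]

theorem sw_key (δ : A →L[ℂ] A) (v : ℂ → A)
    (hv : ∀ z, HasDerivAt v (δ (v z)) z) (hv0 : v 0 = 0) (z : ℂ) : v z = 0 := by
  set h : ℂ → A := fun w => exp (w • (-δ)) (v w) with hh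
  have hcomm : ∀ w : ℂ, Commute (δ : A →L[ℂ] A) (exp (w • (-δ))) := fun w =>
    Commute.exp_right (by
      have := sw_commute δ (-δ) ((Commute.refl δ).neg_right) 1 w
      rwa [one_smul] at this)
  have hcom' : ∀ (w : ℂ) (x : A), δ (exp (w • (-δ)) x) = exp (w • (-δ)) (δ x) := by
    intro w x
    have := DFunLike.congr_fun (hcomm w).eq x
    simpa only [ContinuousLinearMap.mul_apply] using this
  have hder : ∀ w, HasDerivAt h 0 w := by
    intro w
    have h1 := hasDerivAt_exp_smul_const' (𝕂 := ℂ) (-δ) w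
    have h2 := h1.clm_apply (hv w)
    refine h2.congr_deriv ?_
    have e1 : ((-δ) * exp (w • (-δ))) (v w) = -(δ (exp (w • (-δ)) (v w))) := by
      simp [ContinuousLinearMap.mul_apply]
    rw [e1, hcom' w (v w)]
    simp
  have hdiff : Differentiable ℂ h := fun w => (hder w).differentiableAt
  have hfd : ∀ w, fderiv ℂ h w = 0 := by
    intro w
    have h1 := (hder w).hasFDerivAt.fderiv
    have h2 : ContinuousLinearMap.toSpanSingleton ℂ (0 : A) = 0 := by ext; simp
    rw [h2] at h1
    exact h1
  have hconst : h z = h 0 := is_const_of_fderiv_eq_zero hdiff hfd z 0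
  have h0 : h 0 = 0 := by simp [hh, hv0]
  have hz0 : exp (z • (-δ)) (v z) = 0 := hconst.trans h0
  have hinv : exp (z • δ) * exp (z • (-δ)) = 1 := by
    rw [← exp_add_of_commute_of_mem_ball (𝕂 := ℂ) (sw_commute δ (-δ) ((Commute.refl δ).neg_right) z z)
      ((expSeries_radius_eq_top ℂ (A →L[ℂ] A)).symm ▸ edist_lt_top _ _)
      ((expSeries_radius_eq_top ℂ (A →L[ℂ] A)).symm ▸ edist_lt_top _ _)]
    rw [smul_neg, add_neg_cancel, exp_zero]
  have h3 := congrArg (fun x => exp (z • δ) x) hz0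
  simp only [map_zero] at h3
  calc v z = (exp (z • δ) * exp (z • (-δ))) (v z) := by rw [hinv]; simp
    _ = 0 := by rw [ContinuousLinearMap.mul_apply]; exact h3

theorem sw_deriv (δ : A →L[ℂ] A) (x : A) (w : ℂ) :
    HasDerivAt (fun u : ℂ => exp (u • δ) x) (δ (exp (w • δ) x)) w := by
  have h1 := hasDerivAt_exp_smul_const' (𝕂 := ℂ) δ w
  have h2 := h1.clm_apply (hasDerivAt_const w x)
  refine h2.congr_deriv ?_
  simp [ContinuousLinearMap.mul_apply]

theorem sw_exp_one (δ : A →L[ℂ] A) (hδ : ∀ a b : A, δ (a * b) = δ a * b + a * δ b) (z : ℂ) :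
    exp (z • δ) 1 = 1 := by
  have hδ1 : δ 1 = 0 := by
    have := hδ 1 1
    simp only [one_mul, mul_one] at this
    have := left_eq_add.mp this
    simpa using this
  have key := sw_key δ (fun u => exp (u • δ) 1 - 1) (fun u => by
      have h := (sw_deriv δ 1 u).sub_const 1
      have e : δ (exp (u • δ) 1 - 1) = δ (exp (u • δ) 1) := by
        rw [map_sub, hδ1, sub_zero]
      rw [e]
      exact h)
    (by show exp ((0:ℂ) • δ) 1 - 1 = 0
        rw [show ((0:ℂ) • δ) = 0 from zero_smul ℂ δ, exp_zero]; simp) z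
  rwa [sub_eq_zero] at key

theorem sw_exp_mul (δ : A →L[ℂ] A) (hδ : ∀ a b : A, δ (a * b) = δ a * b + a * δ b)
    (z : ℂ) (a b : A) :
    exp (z • δ) (a * b) = exp (z • δ) a * exp (z • δ) b := by
  have key := sw_key δ
    (fun u => exp (u • δ) (a * b) - exp (u • δ) a * exp (u • δ) b) (fun u => by
      have h := (sw_deriv δ (a * b) u).sub ((sw_deriv δ a u).mul (sw_deriv δ b u))
      have e : δ (exp (u • δ) (a * b) - exp (u • δ) a * exp (u • δ) b)
          = δ (exp (u • δ) (a * b))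
            - (δ (exp (u • δ) a) * exp (u • δ) b
              + exp (u • δ) a * δ (exp (u • δ) b)) := by
        rw [map_sub, hδ]
      rw [e]
      exact h)
    (by show exp ((0:ℂ) • δ) (a*b) - exp ((0:ℂ) • δ) a * exp ((0:ℂ) • δ) b = 0
        rw [show ((0:ℂ) • δ) = 0 from zero_smul ℂ δ, exp_zero]; simp) z
  rwa [sub_eq_zero] at key

open WeakDual WeakDual.CharacterSpace in
theorem sw_char (δ : A →L[ℂ] A) (hδ : ∀ a b : A, δ (a * b) = δ a * b + a * δ b)
    (φ : characterSpace ℂ A) (a : A) : φ (δ a) = 0 := by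
  set f : ℂ → ℂ := fun z => φ (exp (z • δ) a) with hf
  have hspec : ∀ z : ℂ, f z ∈ spectrum ℂ a := by
    intro z
    let ψ : A →ₐ[ℂ] A := AlgHom.ofLinearMap ((exp (z • δ) : A →L[ℂ] A) : A →ₗ[ℂ] A)
      (sw_exp_one δ hδ z) (sw_exp_mul δ hδ z)
    have := AlgHom.apply_mem_spectrum ((equivAlgHom φ).comp ψ) a
    simpa [ψ, equivAlgHom_coe] using this
  have hbdd : Bornology.IsBounded (Set.range f) := by
    rw [isBounded_iff_forall_norm_le]
    exact ⟨‖a‖ * ‖(1 : A)‖, by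
      rintro _ ⟨z, rfl⟩
      exact spectrum.norm_le_norm_mul_of_mem (hspec z)⟩
  have hder : ∀ z : ℂ, HasDerivAt f (φ (δ (exp (z • δ) a))) z := by
    intro z
    have h := (hasDerivAt_const (𝕜 := ℂ) z
      (show A →L[ℂ] ℂ from (φ : WeakDual ℂ A))).clm_apply
      (sw_deriv δ a z)
    simp at h
    exact h
  have hdiff : Differentiable ℂ f := fun z => (hder z).differentiableAt
  have hc : ∀ z, f z = f 0 := fun z => hdiff.apply_eq_apply_of_bounded hbdd z 0
  have h2 : HasDerivAt f 0 0 := by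
    have hfun : f = fun _ => f 0 := funext hc
    rw [hfun]
    exact hasDerivAt_const _ _
  have h3 := (hder 0).unique h2
  rw [show ((0:ℂ) • δ) = 0 from zero_smul ℂ δ, exp_zero] at h3
  simpa using h3

end aux

/-- (Singer–Wermer) Every continuous derivation on a commutative semisimple complex
Banach algebra is identically zero. -/
theorem singer_wermer (A : Type*) [NormedCommRing A] [NormedAlgebra ℂ A] [CompleteSpace A]
    (hss : (⊥ : Ideal A).jacobson = ⊥)
    (δ : A →L[ℂ] A)
    (hδ : ∀ a b : A, δ (a * b) = δ a * b + a * δ b) :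
    δ = 0 := by
  ext a
  rw [ContinuousLinearMap.zero_apply]
  have hmem : δ a ∈ (⊥ : Ideal A).jacobson := by
    rw [Ideal.jacobson]
    refine Ideal.mem_sInf.mpr ?_
    rintro J ⟨-, hJmax⟩
    haveI := hJmax
    have hker : J = RingHom.ker (WeakDual.CharacterSpace.equivAlgHom J.toCharacterSpace) := by
      refine hJmax.eq_of_le (RingHom.ker_ne_top _) fun x hx => ?_
      have h1 : WeakDual.CharacterSpace.equivAlgHom J.toCharacterSpace x = 0 := by
        rw [WeakDual.CharacterSpace.equivAlgHom_coe]
        exact J.toCharacterSpace_apply_eq_zero_of_mem hx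
      simpa [RingHom.mem_ker] using h1
    rw [hker]
    have h2 : WeakDual.CharacterSpace.equivAlgHom J.toCharacterSpace (δ a) = 0 := by
      rw [WeakDual.CharacterSpace.equivAlgHom_coe]
      exact sw_char δ hδ J.toCharacterSpace a
    simpa [RingHom.mem_ker] using h2
  rw [hss] at hmem
  simpa using hmem
end

section
/- Every derivation of the matrix algebra M_n(ℂ) is inner: if δ : M_n(ℂ) → M_n(ℂ) is a ℂ-linear map satisfying δ(XY) = δ(X)Y + Xδ(Y) for all X, Y ∈ M_n(ℂ), then there exists a matrix A ∈ M_n(ℂ) such that δ(X) = AX − XA for all X ∈ M_n(ℂ). -/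
open Matrix Finset

/-- Every derivation of the matrix algebra `Mₙ(ℂ)` is inner. -/
theorem matrix_derivation_inner (n : ℕ)
    (δ : Matrix (Fin n) (Fin n) ℂ →ₗ[ℂ] Matrix (Fin n) (Fin n) ℂ)
    (hδ : ∀ X Y : Matrix (Fin n) (Fin n) ℂ, δ (X * Y) = δ X * Y + X * δ Y) :
    ∃ A : Matrix (Fin n) (Fin n) ℂ, ∀ X, δ X = A * X - X * A := by
  rcases Nat.eq_zero_or_pos n with h0 | hpos
  · subst h0
    exact ⟨0, fun X => by ext i; exact i.elim0⟩
  haveI : NeZero n := ⟨hpos.ne'⟩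
  set e : Fin n → Fin n → Matrix (Fin n) (Fin n) ℂ :=
    fun i j => Matrix.single i j 1 with he
  have hsum1 : ∑ k, e k k = 1 := by
    ext i j
    rw [Matrix.sum_apply]
    by_cases h : i = j
    · subst h
      rw [Finset.sum_eq_single i (fun k _ hk => by simp [he, hk]) (by simp)]
      simp [he, Matrix.one_apply]
    · rw [Finset.sum_eq_zero fun k _ => ?_]
      · simp [Matrix.one_apply, h]
      · exact Matrix.single_apply_of_ne _ _ _ _ _ fun ⟨h1, h2⟩ => h (h1.symm.trans h2)
  set A := ∑ k, δ (e k 0) * e 0 k with hA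
  refine ⟨A, fun X => ?_⟩
  have key : ∀ i j, δ (e i j) = A * e i j - e i j * A := by
    intro i j
    have hAe : A * e i j = δ (e i 0) * e 0 j := by
      rw [hA, Finset.sum_mul]
      rw [Finset.sum_eq_single i]
      · rw [mul_assoc, he]
        simp [Matrix.single_mul_single_same]
      · intro k _ hk
        rw [mul_assoc, he]
        rw [Matrix.single_mul_single_of_ne _ _ _ _ hk, mul_zero]
      · simp
    have heA : e i j * A = δ (e i 0) * e 0 j - δ (e i j) := by
      have step : ∀ k, e i j * (δ (e k 0) * e 0 k)
          = (if j = k then δ (e i 0) * e 0 k else 0) - δ (e i j) * e k k := by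
        intro k
        have h1 : e i j * δ (e k 0) = δ (e i j * e k 0) - δ (e i j) * e k 0 := by
          rw [hδ]; exact (add_sub_cancel_left _ _).symm
        rw [← mul_assoc, h1, sub_mul, mul_assoc]
        have h2 : e k 0 * e 0 k = e k k := by
          simp [he, Matrix.single_mul_single_same]
        rw [h2]
        congr 1
        by_cases hjk : j = k
        · subst hjk
          have : e i j * e j 0 = e i 0 := by
            simp [he, Matrix.single_mul_single_same]
          rw [this, if_pos rfl]
        · have : e i j * e k 0 = 0 := by
            simpa [he] using (Matrix.single_mul_single_of_ne 1 i j k hjk 1 : Matrix.single i j (1:ℂ) * Matrix.single k (0 : Fin n) 1 = 0)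
          rw [this, if_neg hjk, map_zero, zero_mul]
      rw [hA, Finset.mul_sum]
      simp_rw [step]
      rw [Finset.sum_sub_distrib, ← Finset.mul_sum, hsum1, mul_one]
      congr 1
      simp
    rw [hAe, heA]; exact (sub_sub_cancel _ _).symm
  -- extend by linearity
  conv_lhs => rw [matrix_eq_sum_single X]
  rw [map_sum]
  have hsb : ∀ i j : Fin n, Matrix.single i j (X i j) = X i j • e i j := by
    intro i j
    rw [he, Matrix.smul_single, smul_eq_mul, mul_one]
  simp_rw [map_sum, hsb, LinearMap.map_smul, key]
  conv_rhs => rw [matrix_eq_sum_single X]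
  simp_rw [hsb, Finset.mul_sum, Finset.sum_mul, Matrix.mul_smul, Matrix.smul_mul,
    ← Finset.sum_sub_distrib, ← smul_sub]
end

section
/- Let L be a finite-dimensional Lie algebra over a field of characteristic 0 whose Killing form λ(x, y) = tr(ad(x) ∘ ad(y)) is nondegenerate (i.e., L is semisimple). Then every derivation of L is inner: if D : L → L is linear and satisfies D([x, y]) = [D(x), y] + [x, D(y)] for all x, y ∈ L, then there exists d ∈ L with D = ad(d). -/
/-- Every derivation of a finite-dimensional Lie algebra over a field of characteristic 0
with nondegenerate Killing form (i.e. a semisimple Lie algebra) is inner. -/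
theorem lie_derivation_inner (K L : Type*) [Field K] [CharZero K] [LieRing L]
    [LieAlgebra K L] [Module.Finite K L]
    (hK : (killingForm K L).Nondegenerate)
    (D : L →ₗ[K] L)
    (hD : ∀ x y : L, D ⁅x, y⁆ = ⁅D x, y⁆ + ⁅x, D y⁆) :
    ∃ d : L, ∀ x : L, D x = ⁅d, x⁆ := by
  have : LieAlgebra.IsKilling K L := by
    constructor
    rw [eq_bot_iff]
    intro x hx
    rw [LieIdeal.mem_killingCompl] at hx
    exact hK.1 x fun y => by
      have h := hx y (LieSubmodule.mem_top y)
      have hs := (LieModule.traceForm_isSymm K L L).eq y x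
      simp only [RingHom.id_apply] at hs
      exact hs ▸ h
  let D' : LieDerivation K L L := ⟨D, fun a b => by rw [hD a b]; rw [← lie_skew b (D a)]; abel⟩
  obtain ⟨d, hd⟩ := LieDerivation.IsKilling.exists_eq_ad (R := K) D'
  exact ⟨d, fun x => by
    have := congrArg (fun f => (f : LieDerivation K L L) x) hd
    simpa [D'] using this.symm⟩
end

section
/- (Sinclair) Let A be a semisimple complex Banach algebra and let D : A → A be a continuous linear map satisfying D(a²) = aD(a) + D(a)a for all a ∈ A (a continuous Jordan derivation). Then D is an associative derivation: D(ab) = D(a)b + aD(b) for all a, b ∈ A. -/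
section Aux

private theorem semiprime_of_jacobson {A : Type*} [Ring A]
    (hss : (⊥ : Ideal A).jacobson = ⊥)
    (u : A) (h : ∀ x, u * x * u = 0) : u = 0 := by
  have hu : u ∈ (⊥ : Ideal A).jacobson := by
    refine Submodule.mem_sInf.2 ?_
    rintro J ⟨-, hJmax⟩
    by_contra hu
    have hmem : u ∈ J ⊔ Ideal.span {u} :=
      Ideal.mem_sup_right (Ideal.subset_span (Set.mem_singleton u))
    have hlt : J < J ⊔ Ideal.span {u} :=
      lt_of_le_of_ne le_sup_left (fun e => hu (by rw [e]; exact hmem))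
    have htop : J ⊔ Ideal.span {u} = ⊤ := hJmax.out.2 _ hlt
    have h1 : (1 : A) ∈ J ⊔ Ideal.span {u} := by rw [htop]; trivial
    rcases Submodule.mem_sup.1 h1 with ⟨m, hmJ, z, hz, hsum⟩
    rcases Submodule.mem_span_singleton.1 hz with ⟨r, hr⟩
    rw [smul_eq_mul] at hr
    have hm : m = 1 - r * u := by
      rw [← hsum, ← hr]; abel
    have hnil : (r*u)*(r*u) = 0 := by
      have hx := h r
      calc (r*u)*(r*u) = r*(u*r*u) := by noncomm_ring
        _ = 0 := by rw [hx, mul_zero]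
    have hunit : IsUnit m := by
      refine ⟨⟨m, 1 + r*u, ?_, ?_⟩, rfl⟩
      · rw [hm]; linear_combination (norm := noncomm_ring) -hnil
      · rw [hm]; linear_combination (norm := noncomm_ring) -hnil
    exact hJmax.out.1 (Ideal.eq_top_of_isUnit_mem J hmJ hunit)
  rw [hss] at hu
  exact (Ideal.mem_bot).1 hu


variable {A : Type*} [NormedRing A] [NormedAlgebra ℂ A]

private lemma two_cancel {x y : A} (h : x + x = y + y) : x = y := by
  have h2 : (2:ℂ) • x = (2:ℂ) • y := by rw [two_smul, two_smul]; exact h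
  calc x = ((2:ℂ)⁻¹ * 2) • x := by norm_num
    _ = (2:ℂ)⁻¹ • ((2:ℂ) • x) := by rw [mul_smul]
    _ = (2:ℂ)⁻¹ • ((2:ℂ) • y) := by rw [h2]
    _ = ((2:ℂ)⁻¹ * 2) • y := by rw [mul_smul]
    _ = y := by norm_num

private lemma add_self_zero {x : A} (h : x + x = 0) : x = 0 :=
  two_cancel (by rw [h]; norm_num)

variable (D : A →L[ℂ] A)

/-- Linearized Jordan identity. -/
private lemma jlin (hD : ∀ a : A, D (a * a) = a * D a + D a * a) (a b : A) :
    D (a*b) + D (b*a) = a * D b + D b * a + D a * b + b * D a := by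
  have h := hD (a + b)
  rw [show (a+b)*(a+b) = a*a + (a*b + b*a) + b*b from by noncomm_ring] at h
  simp only [map_add] at h
  rw [hD a, hD b] at h
  linear_combination (norm := noncomm_ring) h

/-- Jordan triple identity. -/
private lemma jtriple (hD : ∀ a : A, D (a * a) = a * D a + D a * a) (a b : A) :
    D (a*b*a) = D a * b * a + a * D b * a + a * b * D a := by
  have h1 := jlin D hD a (a*b + b*a)
  rw [show a*(a*b+b*a) = (a*a)*b + (a*b*a) from by noncomm_ring,
      show (a*b+b*a)*a = (a*b*a) + b*(a*a) from by noncomm_ring] at h1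
  simp only [map_add] at h1
  have h2 := jlin D hD (a*a) b
  rw [hD a] at h2
  have hW := jlin D hD a b
  apply two_cancel
  linear_combination (norm := noncomm_ring) h1 - h2 + a * hW + hW * a

/-- Trilinear Jordan triple identity. -/
private lemma jtri3 (hD : ∀ a : A, D (a * a) = a * D a + D a * a) (a x c : A) :
    D (a*x*c) + D (c*x*a) =
      D a * x * c + a * D x * c + a * x * D c + D c * x * a + c * D x * a + c * x * D a := by
  have h := jtriple D hD (a + c) x
  rw [show (a+c)*x*(a+c) = a*x*a + (a*x*c + c*x*a) + c*x*c from by noncomm_ring] at h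
  simp only [map_add] at h
  have ha := jtriple D hD a x
  have hc := jtriple D hD c x
  linear_combination (norm := noncomm_ring) h - ha - hc

/-- Key identity: δ(a,b) x [a,b] + [a,b] x δ(a,b) = 0. -/
private lemma keyid (hD : ∀ a : A, D (a * a) = a * D a + D a * a) (a b x : A) :
    (D (a*b) - D a * b - a * D b) * x * (a*b - b*a)
      + (a*b - b*a) * x * (D (a*b) - D a * b - a * D b) = 0 := by
  have E1 := jtri3 D hD (a*b) x (b*a)
  rw [show (a*b)*x*(b*a) = a*(b*x*b)*a from by noncomm_ring,
      show (b*a)*x*(a*b) = b*(a*x*a)*b from by noncomm_ring] at E1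
  have E2 := jtriple D hD a (b*x*b)
  rw [jtriple D hD b x] at E2
  have E3 := jtriple D hD b (a*x*a)
  rw [jtriple D hD a x] at E3
  have hQ : D (b*a) = a * D b + D b * a + D a * b + b * D a - D (a*b) := by
    have := jlin D hD a b
    linear_combination (norm := noncomm_ring) this
  rw [hQ] at E1
  linear_combination (norm := noncomm_ring) E1 - E2 - E3


/-- In a semiprime ring, `uRc = 0` implies `cRu = 0`. -/
private lemma sp_rev (hss : (⊥ : Ideal A).jacobson = ⊥) {u c : A} (h : ∀ x, u*x*c = 0) : ∀ x, c*x*u = 0 := by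
  intro x
  apply semiprime_of_jacobson hss
  intro y
  have h0 := h y
  linear_combination (norm := noncomm_ring) (c*x) * h0 * (x*u)

/-- Brešar's lemma: in a 2-torsion-free semiprime ring,
`uxc + cxu = 0` for all `x` implies `uxc = 0` for all `x`. -/
private lemma sp_half (hss : (⊥ : Ideal A).jacobson = ⊥) {u c : A} (H : ∀ z, u*z*c + c*z*u = 0) : ∀ x, u*x*c = 0 := by
  intro x
  apply semiprime_of_jacobson hss
  intro t
  have hA : (u*x*u)*t*(c*x*c) = (u*x*c)*t*(u*x*c) := by
    linear_combination (norm := noncomm_ring) (H (x*u*t)) * (x*c) - (H x) * (t*(u*(x*c)))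
  have hB : (u*x*c)*t*(u*x*c) = -((u*x*u)*t*(c*x*c)) := by
    linear_combination (norm := noncomm_ring) (u*x) * (H t) * (x*c)
  have hX : (u*x*u)*t*(c*x*c) = 0 := by
    apply add_self_zero
    linear_combination (norm := noncomm_ring) hA + hB
  rw [hA] at hX
  exact hX


/-- The Jordan-derivation defect `δ(a,b) = D(ab) - D(a)b - aD(b)`. -/
private noncomputable def del (D : A →L[ℂ] A) (a b : A) : A := D (a*b) - D a * b - a * D b

private lemma del_def (D : A →L[ℂ] A) (a b : A) :
    del D a b = D (a*b) - D a * b - a * D b := rfl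

private lemma del_add_left (D : A →L[ℂ] A) (a c b : A) :
    del D (a+c) b = del D a b + del D c b := by
  simp only [del_def, add_mul, map_add]; noncomm_ring

private lemma del_add_right (D : A →L[ℂ] A) (a b d : A) :
    del D a (b+d) = del D a b + del D a d := by
  simp only [del_def, mul_add, map_add]; noncomm_ring

end Aux

section Aux2
variable {A : Type*} [NormedRing A] [NormedAlgebra ℂ A]
variable (hss : (⊥ : Ideal A).jacobson = ⊥) (D : A →L[ℂ] A)
include hss

private lemma step3 (hD : ∀ a : A, D (a * a) = a * D a + D a * a) :
    ∀ a b x : A, del D a b * x * (a*b - b*a) = 0 := by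
  intro a b x
  have H : ∀ z, del D a b * z * (a*b - b*a) + (a*b - b*a) * z * del D a b = 0 := by
    intro z; rw [del_def]; exact keyid D hD a b z
  exact sp_half hss H x

private lemma step3r (hD : ∀ a : A, D (a * a) = a * D a + D a * a) :
    ∀ a b x : A, (a*b - b*a) * x * del D a b = 0 := fun a b =>
  sp_rev hss (step3 hss D hD a b)

private lemma step4 (hD : ∀ a : A, D (a * a) = a * D a + D a * a) :
    ∀ a b c x : A, del D a b * x * (c*b - b*c) = 0 := by
  intro a b c x
  apply semiprime_of_jacobson hss
  intro y
  have hlin := step3 hss D hD (a+c) b x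
  rw [del_add_left] at hlin
  have hE : del D a b * x * (c*b - b*c) + del D c b * x * (a*b - b*a) = 0 := by
    linear_combination (norm := noncomm_ring) hlin - step3 hss D hD a b x - step3 hss D hD c b x
  have hz := step3r hss D hD a b y
  linear_combination (norm := noncomm_ring)
    hE * (y * (del D a b * x * (c*b - b*c))) - (del D c b * x) * hz * (x*(c*b - b*c))

private lemma step4r (hD : ∀ a : A, D (a * a) = a * D a + D a * a) :
    ∀ a b c x : A, (c*b - b*c) * x * del D a b = 0 := fun a b c =>
  sp_rev hss (step4 hss D hD a b c)

private lemma step5 (hD : ∀ a : A, D (a * a) = a * D a + D a * a) :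
    ∀ a b c d x : A, del D a b * x * (c*d - d*c) = 0 := by
  intro a b c d x
  apply semiprime_of_jacobson hss
  intro y
  have hlin := step4 hss D hD a (b+d) c x
  rw [del_add_right] at hlin
  have hE : del D a b * x * (c*d - d*c) + del D a d * x * (c*b - b*c) = 0 := by
    linear_combination (norm := noncomm_ring) hlin - step4 hss D hD a b c x - step4 hss D hD a d c x
  have hz := step4r hss D hD a b c y
  linear_combination (norm := noncomm_ring)
    hE * (y * (del D a b * x * (c*d - d*c))) - (del D a d * x) * hz * (x*(c*d - d*c))

private lemma step5r (hD : ∀ a : A, D (a * a) = a * D a + D a * a) :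
    ∀ a b c d x : A, (c*d - d*c) * x * del D a b = 0 := fun a b c d =>
  sp_rev hss (step5 hss D hD a b c d)

/-- Every value `δ(a,b)` is central. -/
private lemma step6 (hD : ∀ a : A, D (a * a) = a * D a + D a * a) :
    ∀ a b w : A, del D a b * w = w * del D a b := by
  intro a b w
  rw [← sub_eq_zero]
  apply semiprime_of_jacobson hss
  intro y
  have h1 := step5r hss D hD a b (del D a b) w y
  have h2 := step5r hss D hD a b (del D a b) w (y*w)
  linear_combination (norm := noncomm_ring) h1 * w - h2

/-- If all commutators with `y0` are central, then `y0` is central. -/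
private lemma comm_central (y0 : A)
    (hc : ∀ x w : A, (x*y0 - y0*x) * w = w * (x*y0 - y0*x)) : ∀ x, x*y0 = y0*x := by
  intro x
  rw [← sub_eq_zero]
  have key : ∀ x1 x2 : A, (x2*y0 - y0*x2) * (x1*x2 - x2*x1) = 0 := by
    intro x1 x2
    have e1 := hc (x1*x2) x2
    linear_combination (norm := noncomm_ring)
      (hc x2 x1) * x2 + e1 - (hc x1 (x2*x2)) + x2 * (hc x1 x2) - (hc x2 (x2*x1))
  have k := key y0 x
  apply semiprime_of_jacobson hss
  intro w
  linear_combination (norm := noncomm_ring) (hc x w) * (x*y0 - y0*x) - w * k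

/-- δ(c, x) = 0 whenever c is central. -/
private lemma del_of_central (hD : ∀ a : A, D (a * a) = a * D a + D a * a)
    {c : A} (hc : ∀ w, c*w = w*c) : ∀ x, del D c x = 0 := by
  have h2 : ∀ x : A, del D c x + del D c x = x * D c - D c * x := by
    intro x
    have h := jlin D hD c x
    rw [show x*c = c*x from (hc x).symm] at h
    have hcD := hc (D x)
    simp only [del_def]
    linear_combination (norm := noncomm_ring) h - hcD
  have hcen : ∀ x' w : A, (x'*(D c) - (D c)*x') * w = w * (x'*(D c) - (D c)*x') := by
    intro x' w
    rw [← h2 x']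
    linear_combination (norm := noncomm_ring)
      (step6 hss D hD c x' w) + (step6 hss D hD c x' w)
  intro x
  apply add_self_zero
  rw [h2 x, comm_central hss (D c) hcen x, sub_self]

end Aux2

/-- (Sinclair) Every continuous Jordan derivation on a semisimple complex Banach algebra
is an associative derivation. -/
theorem sinclair_jordan_derivation (A : Type*) [NormedRing A] [NormedAlgebra ℂ A]
    [CompleteSpace A]
    (hss : (⊥ : Ideal A).jacobson = ⊥)
    (D : A →L[ℂ] A)
    (hD : ∀ a : A, D (a * a) = a * D a + D a * a) :
    ∀ a b : A, D (a * b) = D a * b + a * D b := by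
  intro a b
  set u := del D a b with hu
  have hcu : ∀ w, u*w = w*u := step6 hss D hD a b
  have hu_comm : ∀ r s : A, u * (r*s - s*r) = 0 := by
    intro r s
    have := step5 hss D hD a b r s 1
    simpa using this
  have hcua : ∀ w, (u*a)*w = w*(u*a) := by
    intro w
    have h1 := hu_comm a w
    calc u*a*w = u*(a*w) := by rw [mul_assoc]
      _ = u*(w*a) := by linear_combination (norm := noncomm_ring) h1
      _ = (u*w)*a := by rw [mul_assoc]
      _ = (w*u)*a := by rw [hcu w]
      _ = w*(u*a) := by rw [mul_assoc]
  have e1 := del_of_central hss D hD hcua b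
  have e2 := del_of_central hss D hD hcu a
  have e3 := del_of_central hss D hD hcu (a*b)
  rw [del_def, show (u*a)*b = u*(a*b) from mul_assoc u a b] at e1
  rw [del_def] at e2 e3
  have hu2 : u * u = 0 := by
    nth_rewrite 2 [hu]
    rw [del_def]
    linear_combination (norm := noncomm_ring) e1 - e3 + e2 * b
  have hu0 : u = 0 := by
    apply semiprime_of_jacobson hss
    intro x
    linear_combination (norm := noncomm_ring) (hcu x) * u + x * hu2
  rw [hu, del_def] at hu0
  linear_combination (norm := noncomm_ring) hu0
end

section
/- (Šilov) Every algebra homomorphism from a complex Banach algebra A into a commutative semisimple complex Banach algebra B is automatically continuous. -/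
open WeakDual

/-- In a commutative complex Banach algebra, an element annihilated by every character lies
in every maximal ideal. -/
lemma mem_maximal_of_characters_eq_zero {B : Type*} [NormedCommRing B] [NormedAlgebra ℂ B]
    [CompleteSpace B] {b : B} (hb : ∀ χ : characterSpace ℂ B, χ b = 0)
    (M : Ideal B) (hM : M.IsMaximal) : b ∈ M := by
  haveI := hM
  set χ := M.toCharacterSpace
  have hker : M ≤ RingHom.ker (χ : B →+* ℂ) := fun x hx => by
    simpa [RingHom.mem_ker] using M.toCharacterSpace_apply_eq_zero_of_mem hx
  have hne : RingHom.ker (χ : B →+* ℂ) ≠ ⊤ := by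
    intro h
    have h1 : (1 : B) ∈ RingHom.ker (χ : B →+* ℂ) := h ▸ Submodule.mem_top
    simp [RingHom.mem_ker] at h1
  have : M = RingHom.ker (χ : B →+* ℂ) := hM.eq_of_le hne hker
  rw [this, RingHom.mem_ker]
  exact hb χ

/-- (Šilov) Every algebra homomorphism from a complex Banach algebra into a commutative
semisimple complex Banach algebra is automatically continuous. -/
theorem silov_automatic_continuity (A B : Type*) [NormedRing A] [NormedAlgebra ℂ A]
    [CompleteSpace A] [NormedCommRing B] [NormedAlgebra ℂ B] [CompleteSpace B]
    (hss : (⊥ : Ideal B).jacobson = ⊥)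
    (φ : A →ₗ[ℂ] B)
    (hφ : ∀ x y : A, φ (x * y) = φ x * φ y) :
    Continuous φ := by
  -- first: for each character χ of B, the map χ ∘ φ is continuous
  have key : ∀ χ : characterSpace ℂ B, Continuous fun x : A => χ (φ x) := by
    intro χ
    have he : χ (φ 1) = 0 ∨ χ (φ 1) = 1 := by
      have : χ (φ 1) * χ (φ 1) = χ (φ 1) := by
        rw [← map_mul, ← hφ, one_mul]
      have := mul_eq_mul_left_iff.mp (by rw [this, mul_one] : χ (φ 1) * χ (φ 1) = χ (φ 1) * 1)
      tauto
    rcases he with h0 | h1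
    · -- χ ∘ φ = 0
      have : (fun x : A => χ (φ x)) = fun _ => 0 := by
        funext x
        have : φ x = φ x * φ 1 := by rw [← hφ, mul_one]
        rw [this, map_mul, h0, mul_zero]
      rw [this]; exact continuous_const
    · -- χ ∘ φ is a unital algebra hom A → ℂ, hence continuous
      let ψ : A →ₐ[ℂ] ℂ := AlgHom.mk'
        { toFun := fun x => χ (φ x)
          map_one' := h1
          map_mul' := fun x y => by rw [hφ, map_mul]
          map_zero' := by rw [map_zero, map_zero]
          map_add' := fun x y => by rw [map_add, map_add] }
        (fun c x => by simp [map_smul])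
      exact map_continuous ψ
  -- closed graph theorem
  refine φ.continuous_of_seq_closed_graph fun u x y hu hy => ?_
  have hsep : ∀ χ : characterSpace ℂ B, χ (y - φ x) = 0 := by
    intro χ
    have h1 : Filter.Tendsto (fun n => χ (φ (u n))) Filter.atTop (nhds (χ (φ x))) :=
      ((key χ).tendsto x).comp hu
    have h2 : Filter.Tendsto (fun n => χ (φ (u n))) Filter.atTop (nhds (χ y)) :=
      ((map_continuous χ).tendsto y).comp hy
    have : χ y = χ (φ x) := tendsto_nhds_unique h2 h1
    rw [map_sub, this, sub_self]
  have hmem : y - φ x ∈ (⊥ : Ideal B).jacobson := by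
    rw [Ideal.jacobson]
    exact Ideal.mem_sInf.mpr fun {J} hJ =>
      mem_maximal_of_characters_eq_zero hsep J hJ.2
  rw [hss] at hmem
  have h0 : y - φ x = 0 := hmem
  linear_combination (norm := module) h0
end

section
/- (Johnson) Every surjective algebra homomorphism from a complex Banach algebra A onto a semisimple complex Banach algebra B is automatically continuous. -/
open scoped ENNReal NNReal Topology
open Metric Set Filter


lemma ofReal_norm_eq_coe_nnnorm {E : Type*} [SeminormedAddGroup E] (a : E) :
    ENNReal.ofReal ‖a‖ = (‖a‖₊ : ℝ≥0∞) := ENNReal.ofReal_eq_coe_nnreal _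

section basics
variable {A B : Type*} [NormedRing A] [NormedAlgebra ℂ A] [NormedRing B] [NormedAlgebra ℂ B]

lemma jphi_one (φ : A →ₗ[ℂ] B) (hφ : ∀ x y : A, φ (x * y) = φ x * φ y)
    (hsurj : Function.Surjective φ) : φ 1 = 1 := by
  obtain ⟨e, he⟩ := hsurj 1
  have h1 : ∀ b : B, φ 1 * b = b := by
    intro b
    obtain ⟨a, rfl⟩ := hsurj b
    rw [← hφ, one_mul]
  calc φ 1 = φ 1 * 1 := (mul_one _).symm
    _ = 1 := h1 1

lemma jspectrum_subset (φ : A →ₗ[ℂ] B) (hφ : ∀ x y : A, φ (x * y) = φ x * φ y)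
    (h1 : φ 1 = 1) (x : A) : spectrum ℂ (φ x) ⊆ spectrum ℂ x := by
  intro z hz
  by_contra hzx
  rw [spectrum.notMem_iff] at hzx
  apply (spectrum.notMem_iff).mpr _ hz
  obtain ⟨u, hu⟩ := hzx
  have hmap : ∀ w : ℂ, φ (algebraMap ℂ A w) = algebraMap ℂ B w := by
    intro w
    rw [Algebra.algebraMap_eq_smul_one, Algebra.algebraMap_eq_smul_one, map_smul, h1]
  have key : φ ((algebraMap ℂ A) z - x) = algebraMap ℂ B z - φ x := by
    rw [map_sub, hmap]
  refine isUnit_iff_exists.mpr ⟨φ (↑u⁻¹), ?_, ?_⟩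
  · rw [← key, ← hu, ← hφ, u.mul_inv, h1]
  · rw [← key, ← hu, ← hφ, u.inv_mul, h1]

end basics



section dini
variable {B : Type*} [NormedRing B] [NormedAlgebra ℂ B] [CompleteSpace B]

lemma jdini_mem {x : B} {D : ℝ} (hD1 : 1 ≤ D) (hx : spectralRadius ℂ x < ENNReal.ofReal D) :
    ∃ k : ℕ, ‖x ^ (2^k)‖ < D ^ (2^k) := by
  have ht := spectrum.pow_nnnorm_pow_one_div_tendsto_nhds_spectralRadius x
  have hev : ∀ᶠ m : ℕ in atTop, ((‖x ^ m‖₊ : ℝ≥0∞) ^ (1/(m:ℝ))) < ENNReal.ofReal D :=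
    ht.eventually_lt_const hx
  obtain ⟨M, hM⟩ := eventually_atTop.mp hev
  refine ⟨M, ?_⟩
  have hm : 2 ^ M ≥ M := Nat.le_of_lt (Nat.lt_two_pow_self)
  set m := 2 ^ M with hmdef
  have hmpos : 0 < m := Nat.pow_pos (by norm_num)
  have h := hM m hm
  have hmne : (m : ℝ) ≠ 0 := by positivity
  have h2 : ((‖x ^ m‖₊ : ℝ≥0∞) ^ (1/(m:ℝ))) ^ (m:ℝ) < (ENNReal.ofReal D) ^ (m:ℝ) := by
    apply ENNReal.rpow_lt_rpow h (by positivity)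
  rw [← ENNReal.rpow_mul, one_div, inv_mul_cancel₀ hmne, ENNReal.rpow_one] at h2
  have h3 : (‖x ^ m‖₊ : ℝ≥0∞) < ENNReal.ofReal (D ^ m) := by
    calc (‖x ^ m‖₊ : ℝ≥0∞) < (ENNReal.ofReal D) ^ (m:ℝ) := h2
      _ = (ENNReal.ofReal D) ^ m := (ENNReal.rpow_natCast _ m)
      _ = ENNReal.ofReal (D ^ m) := (ENNReal.ofReal_pow (by linarith) m).symm
  rw [← ofReal_norm_eq_coe_nnnorm, ENNReal.ofReal_lt_ofReal_iff (by positivity)] at h3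
  exact h3

lemma jdini {f : ℂ → B} (hf : Continuous f) {S : Set ℂ} (hS : IsCompact S) {D : ℝ}
    (hD1 : 1 ≤ D) (hD : ∀ z ∈ S, spectralRadius ℂ (f z) < ENNReal.ofReal D) :
    ∃ K₀ : ℕ, ∀ K ≥ K₀, ∀ z ∈ S, ‖(f z) ^ (2^K)‖ ≤ D ^ (2^K) := by
  set U : ℕ → Set ℂ := fun k => {z | ‖(f z) ^ (2^k)‖ < D ^ (2^k)} with hU
  have hopen : ∀ k, IsOpen (U k) := by
    intro k
    exact isOpen_lt (by continuity) continuous_const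
  have hmono : ∀ k, U k ⊆ U (k+1) := by
    intro k z hz
    simp only [hU, Set.mem_setOf_eq] at hz ⊢
    have e1 : (2:ℕ) ^ (k+1) = 2^k * 2 := by ring
    rw [e1, pow_mul, pow_mul]
    calc ‖((f z)^(2^k))^2‖ ≤ ‖(f z)^(2^k)‖^2 := norm_pow_le' _ (by norm_num)
      _ < (D^(2^k))^2 := by
          apply pow_lt_pow_left₀ hz (norm_nonneg _) (by norm_num)
  have hmono' : ∀ k K, k ≤ K → U k ⊆ U K := by
    intro k K hkK
    induction K with
    | zero => simp_all
    | succ n ih =>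
      rcases Nat.lt_or_ge k (n+1) with h | h
      · exact (ih (Nat.lt_succ_iff.mp h)).trans (hmono n)
      · have : k = n+1 := le_antisymm hkK h
        subst this; exact subset_rfl
  have hcover : S ⊆ ⋃ k, U k := by
    intro z hz
    obtain ⟨k, hk⟩ := jdini_mem hD1 (hD z hz)
    exact Set.mem_iUnion.mpr ⟨k, hk⟩
  obtain ⟨t, ht⟩ := hS.elim_finite_subcover U hopen hcover
  refine ⟨t.sup id, fun K hK z hz => ?_⟩
  obtain ⟨k, hkt, hzk⟩ := Set.mem_iUnion₂.mp (ht hz)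
  have : k ≤ K := le_trans (Finset.le_sup (f := id) hkt) hK
  exact le_of_lt (hmono' k K this hzk)

end dini



section annulus
variable {B : Type*} [NormedRing B] [NormedAlgebra ℂ B]

lemma jannulus {g : ℂ → B} (hg : Differentiable ℂ g) {δ R : ℝ} (hδ : 0 < δ) (hδ1 : δ < 1)
    (h1R : 1 < R) (q : ℕ) {mδ mR : ℝ}
    (hmδ : ∀ z : ℂ, ‖z‖ = δ → ‖g z‖ ≤ mδ) (hmR : ∀ z : ℂ, ‖z‖ = R → ‖g z‖ ≤ mR) :
    ‖g 1‖ ≤ max (mδ / δ ^ q) (mR / R ^ q) := by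
  set U : Set ℂ := ball (0:ℂ) R ∩ (closedBall (0:ℂ) δ)ᶜ with hUdef
  have hzne : ∀ z ∈ closure U, z ≠ 0 := by
    intro z hz
    have h1 : closure U ⊆ closure ((closedBall (0:ℂ) δ)ᶜ) :=
      closure_mono inter_subset_right |>.trans (subset_rfl)
    have h2 : closure ((closedBall (0:ℂ) δ)ᶜ) ⊆ {z : ℂ | δ ≤ ‖z‖} := by
      apply closure_minimal
      · intro w hw
        simp only [mem_compl_iff, mem_closedBall, dist_zero_right, not_le] at hw
        exact le_of_lt hw
      · exact isClosed_le continuous_const continuous_norm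
    have := h2 (h1 hz)
    simp only [mem_setOf_eq] at this
    intro h0
    rw [h0] at this
    simp at this
    linarith
  set h : ℂ → B := fun z => (z ^ q)⁻¹ • g z with hhdef
  have hbd : Bornology.IsBounded U := isBounded_ball.subset inter_subset_left
  have hdiff : DiffContOnCl ℂ h U := by
    constructor
    · apply DifferentiableOn.fun_smul
      · apply DifferentiableOn.fun_inv
        · exact (differentiable_pow q).differentiableOn
        · intro z hz
          exact pow_ne_zero q (hzne z (subset_closure hz))
      · exact hg.differentiableOn
    · apply ContinuousOn.smul
      · apply ContinuousOn.inv₀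
        · exact (continuous_pow q).continuousOn
        · intro z hz
          exact pow_ne_zero q (hzne z hz)
      · exact hg.continuous.continuousOn
  have hfr : ∀ z ∈ frontier U, ‖h z‖ ≤ max (mδ / δ ^ q) (mR / R ^ q) := by
    intro z hz
    have hz' : z ∈ frontier (ball (0:ℂ) R) ∩ closure ((closedBall (0:ℂ) δ)ᶜ) ∪
        closure (ball (0:ℂ) R) ∩ frontier ((closedBall (0:ℂ) δ)ᶜ) := frontier_inter_subset _ _ hz
    have hnorm : ‖h z‖ = ‖z‖⁻¹ ^ q * ‖g z‖ := by
      rw [hhdef]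
      simp [norm_smul, norm_inv, norm_pow, inv_pow]
    rcases hz' with ⟨hz1, _⟩ | ⟨_, hz2⟩
    · rw [frontier_ball (0:ℂ) (by linarith : R ≠ 0)] at hz1
      simp only [mem_sphere_iff_norm, sub_zero] at hz1
      refine le_max_of_le_right ?_
      rw [hnorm, hz1, div_eq_mul_inv, mul_comm, inv_pow]
      apply mul_le_mul_of_nonneg_right (hmR z hz1)
      positivity
    · rw [frontier_compl, frontier_closedBall (0:ℂ) (by linarith : δ ≠ 0)] at hz2
      simp only [mem_sphere_iff_norm, sub_zero] at hz2
      refine le_max_of_le_left ?_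
      rw [hnorm, hz2, div_eq_mul_inv, mul_comm, inv_pow]
      apply mul_le_mul_of_nonneg_right (hmδ z hz2)
      positivity
  have h1U : (1:ℂ) ∈ U := by
    constructor
    · simp [mem_ball, h1R]
    · simp only [mem_compl_iff, mem_closedBall, dist_zero_right, not_le]
      simpa using hδ1
  have := Complex.norm_le_of_forall_mem_frontier_norm_le hbd hdiff hfr (subset_closure h1U)
  simpa [hhdef] using this

end annulus





section key
variable {A B : Type*} [NormedRing A] [NormedAlgebra ℂ A] [CompleteSpace A]
  [NormedRing B] [NormedAlgebra ℂ B] [CompleteSpace B]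

lemma jrad_le_pow (x : B) (m : ℕ) (hm : 1 ≤ m) :
    spectralRadius ℂ x ≤ (‖x ^ m‖₊ : ℝ≥0∞) ^ (1/(m:ℝ)) * (‖(1:B)‖₊ : ℝ≥0∞) ^ (1/(m:ℝ)) := by
  have h := spectrum.spectralRadius_le_pow_nnnorm_pow_one_div ℂ x (m - 1)
  have e : ((m - 1 : ℕ) : ℝ) + 1 = (m : ℝ) := by
    have h2 : (m - 1) + 1 = m := Nat.succ_pred_eq_of_pos hm
    exact_mod_cast congrArg (Nat.cast : ℕ → ℝ) h2
  rwa [Nat.sub_add_cancel hm, e] at h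

lemma jsep (φ : A →ₗ[ℂ] B) (hφ : ∀ x y : A, φ (x * y) = φ x * φ y) (h1 : φ 1 = 1)
    (hsurj : Function.Surjective φ)
    {b : B} (hb : ∀ ε : ℝ, 0 < ε → ∃ a : A, ‖a‖ < ε ∧ ‖φ a - b‖ < ε) :
    spectralRadius ℂ b = 0 := by
  have key : ∀ η : ℝ, 0 < η → spectralRadius ℂ b ≤ ENNReal.ofReal η := by
    intro η hη
    obtain ⟨c, hc⟩ := hsurj b
    set N1 : ℝ := ‖(1:A)‖ with hN1def
    have hN1 : 0 ≤ N1 := norm_nonneg _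
    set D : ℝ := N1 * ‖c‖ + 2 with hDdef
    have hD2 : 2 ≤ D := by
      have : 0 ≤ N1 * ‖c‖ := by positivity
      linarith
    have hD0 : 0 < D := by linarith
    have hD1 : 1 ≤ D := by linarith
    set R : ℝ := max 4 (D^2/η^2) with hRdef
    have hR4 : (4:ℝ) ≤ R := le_max_left _ _
    have hR1 : (1:ℝ) < R := by linarith
    have hR0 : (0:ℝ) < R := by linarith
    have hDR : D^2/R ≤ η^2 := by
      have h1' : D^2/η^2 ≤ R := le_max_right _ _
      rw [div_le_iff₀ hR0]
      rw [div_le_iff₀ (by positivity : (0:ℝ) < η^2)] at h1'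
      nlinarith
    set Nb : ℝ := ‖b‖ + 1 with hNbdef
    have hNb : 0 < Nb := by have := norm_nonneg b; linarith
    set d : ℝ := min (1/2) (η/(2*Nb)) with hddef
    have hd0 : 0 < d := lt_min (by norm_num) (by positivity)
    have hd2 : d ≤ 1/2 := min_le_left _ _
    have hdN : d * Nb ≤ η/2 := by
      have h' : d ≤ η/(2*Nb) := min_le_right _ _
      rw [le_div_iff₀ (by positivity)] at h'
      nlinarith
    set δ : ℝ := d^2 with hδdef
    have hδ0 : 0 < δ := by positivity
    have hδ1 : δ < 1 := by nlinarith
    set ε : ℝ := min (2/((1+R)*(N1+1))) (min (d*η/2) 1) with hεdef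
    have hε0 : 0 < ε := by
      apply lt_min (by positivity) (lt_min (by positivity) (by norm_num))
    obtain ⟨a, ha, hab⟩ := hb ε hε0
    have hab1 : ‖φ a - b‖ ≤ d*η/2 :=
      le_of_lt (lt_of_lt_of_le hab ((min_le_right _ _).trans (min_le_left _ _)))
    have hab2 : ‖φ a‖ ≤ Nb := by
      have h' : ‖φ a - b‖ ≤ 1 := le_of_lt (lt_of_lt_of_le hab ((min_le_right _ _).trans (min_le_right _ _)))
      calc ‖φ a‖ = ‖(φ a - b) + b‖ := by rw [sub_add_cancel]
        _ ≤ ‖φ a - b‖ + ‖b‖ := norm_add_le _ _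
        _ ≤ 1 + ‖b‖ := by linarith
        _ = Nb := by rw [hNbdef]; ring
    have haa : ‖a‖ < 2/((1+R)*(N1+1)) := lt_of_lt_of_le ha (min_le_left _ _)
    set f : ℂ → B := fun z => (b - φ a) + z • φ a with hfdef
    have hfc : Continuous f := by
      apply Continuous.add continuous_const
      exact continuous_id.smul continuous_const
    have hf1 : f 1 = b := by simp [hfdef]
    have hfφ : ∀ z : ℂ, f z = φ ((c - a) + z • a) := by
      intro z
      simp only [hfdef, map_add, map_sub, map_smul, hc]
    have hDini : ∀ z ∈ sphere (0:ℂ) R, spectralRadius ℂ (f z) < ENNReal.ofReal D := by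
      intro z hz
      have hzR : ‖z‖ = R := by simpa [mem_sphere, dist_zero_right] using hz
      have hsub : spectrum ℂ (f z) ⊆ spectrum ℂ ((c - a) + z • a) := by
        rw [hfφ z]; exact jspectrum_subset φ hφ h1 _
      have hle : spectralRadius ℂ (f z) ≤ ENNReal.ofReal (‖(c - a) + z • a‖ * N1) := by
        apply iSup₂_le
        intro k hk
        have h' := spectrum.norm_le_norm_mul_of_mem (hsub hk)
        rw [← ofReal_norm_eq_coe_nnnorm]
        exact ENNReal.ofReal_le_ofReal h'
      refine lt_of_le_of_lt hle ?_
      rw [ENNReal.ofReal_lt_ofReal_iff hD0]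
      have hn : ‖(c - a) + z • a‖ ≤ ‖c‖ + (1+R)*‖a‖ := by
        calc ‖(c - a) + z • a‖ ≤ ‖c - a‖ + ‖z • a‖ := norm_add_le _ _
          _ ≤ (‖c‖ + ‖a‖) + R * ‖a‖ := by
              gcongr
              · exact norm_sub_le _ _
              · rw [norm_smul, hzR]
          _ = ‖c‖ + (1+R)*‖a‖ := by ring
      have hkey : (1+R)*‖a‖*(N1+1) < 2 := by
        have h2 : (0:ℝ) < (1+R)*(N1+1) := by positivity
        rw [div_eq_mul_inv] at haa
        calc (1+R)*‖a‖*(N1+1) = ‖a‖ * ((1+R)*(N1+1)) := by ring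
          _ < (2 * ((1+R)*(N1+1))⁻¹) * ((1+R)*(N1+1)) := by
              apply mul_lt_mul_of_pos_right haa h2
          _ = 2 := by field_simp
      have han : 0 ≤ ‖a‖ := norm_nonneg _
      have hcn : 0 ≤ ‖c‖ := norm_nonneg _
      calc ‖(c - a) + z • a‖ * N1 ≤ (‖c‖ + (1+R)*‖a‖) * N1 := by
            apply mul_le_mul_of_nonneg_right hn hN1
        _ = ‖c‖ * N1 + (1+R)*‖a‖*N1 := by ring
        _ < ‖c‖ * N1 + 2 := by
            have : (1+R)*‖a‖*N1 ≤ (1+R)*‖a‖*(N1+1) := by nlinarith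
            linarith
        _ = D := by rw [hDdef]; ring
    obtain ⟨K₀, hK₀⟩ := jdini hfc (isCompact_sphere (0:ℂ) R) hD1 hDini
    -- main estimate
    have hmain : ∀ K : ℕ, K₀ ≤ K → 1 ≤ K → ‖b ^ (2^K)‖ ≤ η ^ (2^K) := by
      intro K hKK hK1
      set q : ℕ := 2^(K-1) with hqdef
      have hm : 2^K = q * 2 := by
        rw [hqdef, ← pow_succ]
        congr 1
        omega
      have hg : Differentiable ℂ (fun z : ℂ => (f z) ^ (2^K)) := by
        apply Differentiable.pow
        exact (differentiable_id.smul_const (φ a)).const_add (b - φ a)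
      have hsmall : ∀ z : ℂ, ‖z‖ = δ → ‖f z‖ ≤ d * η := by
        intro z hz
        calc ‖f z‖ ≤ ‖b - φ a‖ + ‖z • φ a‖ := norm_add_le _ _
          _ ≤ d*η/2 + δ * Nb := by
              gcongr
              · rw [norm_sub_rev]; exact hab1
              · rw [norm_smul, hz]; exact mul_le_mul_of_nonneg_left hab2 (le_of_lt hδ0)
          _ ≤ d*η/2 + d * (η/2) := by
              have : δ * Nb = d * (d * Nb) := by rw [hδdef]; ring
              rw [this]
              have := mul_le_mul_of_nonneg_left hdN (le_of_lt hd0)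
              linarith
          _ = d * η := by ring
      have hmδ : ∀ z : ℂ, ‖z‖ = δ → ‖(f z) ^ (2^K)‖ ≤ (d*η) ^ (2^K) := by
        intro z hz
        calc ‖(f z) ^ (2^K)‖ ≤ ‖f z‖ ^ (2^K) := norm_pow_le' _ (by positivity)
          _ ≤ (d*η) ^ (2^K) := pow_le_pow_left₀ (norm_nonneg _) (hsmall z hz) _
      have hmR : ∀ z : ℂ, ‖z‖ = R → ‖(f z) ^ (2^K)‖ ≤ D ^ (2^K) := by
        intro z hz
        exact hK₀ K hKK z (by simpa [mem_sphere, dist_zero_right] using hz)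
      have hann := jannulus hg hδ0 hδ1 hR1 q hmδ hmR
      rw [hf1] at hann
      refine le_trans hann ?_
      have hd2q : δ ^ q = d ^ (2^K) := by
        rw [hδdef, ← pow_mul, mul_comm 2 q, ← hm]
      have e1 : (d*η) ^ (2^K) / δ ^ q = η ^ (2^K) := by
        rw [mul_pow, hd2q, mul_comm (d ^ (2^K)) (η ^ (2^K)), mul_div_assoc,
          div_self (by positivity : d ^ (2^K) ≠ 0), mul_one]
      have e2 : D ^ (2^K) / R ^ q ≤ η ^ (2^K) := by
        have eD : D ^ (2^K) = (D^2) ^ q := by rw [hm, pow_mul']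
        rw [eD, ← div_pow]
        calc (D^2/R) ^ q ≤ (η^2) ^ q := pow_le_pow_left₀ (by positivity) hDR q
          _ = η ^ (2^K) := by rw [← pow_mul, mul_comm 2 q, ← hm]
      exact max_le (le_of_eq e1) e2
    -- conclude from hmain
    apply ENNReal.le_of_forall_lt_one_mul_le
    intro x hx1
    by_cases hx0 : x = 0
    · simp [hx0]
    have hc' : 1 < x⁻¹ := ENNReal.one_lt_inv.mpr hx1
    have hev := ENNReal.eventually_pow_one_div_le
      (ENNReal.coe_ne_top : (‖(1:B)‖₊ : ℝ≥0∞) ≠ ⊤) hc'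
    obtain ⟨n₀, hn₀⟩ := eventually_atTop.mp hev
    set K : ℕ := max (max K₀ 1) n₀ with hKdef
    set m : ℕ := 2^K with hmdef2
    have hm1 : 1 ≤ m := Nat.one_le_two_pow
    have hbm : ‖b ^ m‖ ≤ η ^ m :=
      hmain K (le_trans (le_max_left _ _) (le_max_left _ _))
        (le_trans (le_max_right _ _) (le_max_left _ _))
    have hrad := jrad_le_pow b m hm1
    have bound2 : (‖b ^ m‖₊ : ℝ≥0∞) ^ (1/(m:ℝ)) ≤ ENNReal.ofReal η := by
      have h3 : (‖b ^ m‖₊ : ℝ≥0∞) ≤ ENNReal.ofReal (η ^ m) := by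
        rw [← ofReal_norm_eq_coe_nnnorm]
        exact ENNReal.ofReal_le_ofReal hbm
      calc (‖b ^ m‖₊ : ℝ≥0∞) ^ (1/(m:ℝ)) ≤ (ENNReal.ofReal (η ^ m)) ^ (1/(m:ℝ)) :=
            ENNReal.rpow_le_rpow h3 (by positivity)
        _ = ENNReal.ofReal η := by
            rw [ENNReal.ofReal_pow (le_of_lt hη), ← ENNReal.rpow_natCast (ENNReal.ofReal η) m,
              ← ENNReal.rpow_mul]
            rw [mul_one_div, div_self (by positivity : (m:ℝ) ≠ 0), ENNReal.rpow_one]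
    have bound3 : (‖(1:B)‖₊ : ℝ≥0∞) ^ (1/(m:ℝ)) ≤ x⁻¹ := by
      apply hn₀ m
      calc n₀ ≤ K := le_max_right _ _
        _ ≤ 2^K := Nat.le_of_lt (Nat.lt_two_pow_self)
    have final : spectralRadius ℂ b ≤ ENNReal.ofReal η * x⁻¹ :=
      le_trans hrad (mul_le_mul' bound2 bound3)
    calc x * spectralRadius ℂ b ≤ x * (ENNReal.ofReal η * x⁻¹) :=
          mul_le_mul_right final x
      _ = ENNReal.ofReal η * (x * x⁻¹) := by ring
      _ = ENNReal.ofReal η := by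
          rw [ENNReal.mul_inv_cancel hx0 (hx1.trans_le le_top).ne, mul_one]
  -- from key to equality
  refine le_antisymm ?_ zero_le
  apply ENNReal.le_of_forall_pos_le_add
  intro ε hε _
  rw [zero_add]
  have := key (ε:ℝ) (by exact_mod_cast hε)
  rwa [ENNReal.ofReal_coe_nnreal] at this

end key


/-- (Johnson) Every surjective algebra homomorphism from a complex Banach algebra onto a
semisimple complex Banach algebra is automatically continuous. -/
theorem johnson_automatic_continuity (A B : Type*) [NormedRing A] [NormedAlgebra ℂ A]
    [CompleteSpace A] [NormedRing B] [NormedAlgebra ℂ B] [CompleteSpace B]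
    (hss : (⊥ : Ideal B).jacobson = ⊥)
    (φ : A →ₗ[ℂ] B)
    (hφ : ∀ x y : A, φ (x * y) = φ x * φ y)
    (hsurj : Function.Surjective φ) :
    Continuous φ := by
  have h1 : φ 1 = 1 := jphi_one φ hφ hsurj
  apply φ.continuous_of_seq_closed_graph
  intro u x y hux huy
  set b : B := y - φ x with hbdef
  have hbS : ∀ w : B, ∀ ε : ℝ, 0 < ε → ∃ a : A, ‖a‖ < ε ∧ ‖φ a - w * b‖ < ε := by
    intro w ε hε
    obtain ⟨v, hv⟩ := hsurj w
    have h2 : Tendsto (fun n => v * (u n - x)) atTop (𝓝 0) := by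
      have h2a : Tendsto (fun n => u n - x) atTop (𝓝 0) := by
        simpa using hux.sub (tendsto_const_nhds (x := x))
      have := h2a.const_mul v
      simpa using this
    have h3 : Tendsto (fun n => φ (v * (u n - x))) atTop (𝓝 (w * b)) := by
      have e : ∀ n, φ (v * (u n - x)) = w * (φ (u n) - φ x) := by
        intro n; rw [hφ, map_sub, hv]
      simp only [e]
      have : Tendsto (fun n => φ (u n) - φ x) atTop (𝓝 (y - φ x)) :=
        huy.sub (tendsto_const_nhds (x := φ x))
      simpa using this.const_mul w
    have e2 : ∀ᶠ n in atTop, ‖v * (u n - x)‖ < ε := by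
      have := h2.norm
      rw [norm_zero] at this
      exact this.eventually_lt_const hε
    have e3 : ∀ᶠ n in atTop, ‖φ (v * (u n - x)) - w * b‖ < ε := by
      have h4 : Tendsto (fun n => ‖φ (v * (u n - x)) - w * b‖) atTop (𝓝 0) := by
        have := (h3.sub (tendsto_const_nhds (x := w * b))).norm
        simpa using this
      exact h4.eventually_lt_const hε
    obtain ⟨n, hn1, hn2⟩ := (e2.and e3).exists
    exact ⟨v * (u n - x), hn1, hn2⟩
  have hrad : ∀ w : B, spectralRadius ℂ (w * b) = 0 := fun w => jsep φ hφ h1 hsurj (hbS w)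
  have hbot : b ∈ (⊥ : Ideal B).jacobson := by
    rw [Ideal.mem_jacobson_iff]
    intro w
    have hunit : IsUnit (w * b + 1) := by
      have hnm : (-1 : ℂ) ∉ spectrum ℂ (w * b) := by
        intro hmem
        have hle : (1 : ℝ≥0∞) ≤ spectralRadius ℂ (w * b) := by
          have := le_iSup₂ (f := fun (k : ℂ) (_ : k ∈ spectrum ℂ (w * b)) => (‖k‖₊ : ℝ≥0∞))
            (-1 : ℂ) hmem
          simp only [nnnorm_neg, nnnorm_one, ENNReal.coe_one] at this
          exact this
        rw [hrad w] at hle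
        simp at hle
      rw [spectrum.notMem_iff] at hnm
      have e : algebraMap ℂ B (-1) - w * b = -(w * b + 1) := by
        rw [map_neg, map_one]; noncomm_ring
      rw [e] at hnm
      exact (IsUnit.neg_iff _).mp hnm
    obtain ⟨uu, huu⟩ := hunit
    refine ⟨(↑uu⁻¹ : B), ?_⟩
    rw [Submodule.mem_bot]
    have hinv : (↑uu⁻¹ : B) * (w * b + 1) = 1 := by rw [← huu]; exact uu.inv_mul
    calc (↑uu⁻¹ : B) * w * b + ↑uu⁻¹ - 1 = ↑uu⁻¹ * (w * b + 1) - 1 := by noncomm_ring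
      _ = 0 := by rw [hinv]; exact sub_self 1
  rw [hss] at hbot
  have hb0 : b = 0 := (Submodule.mem_bot _).mp hbot
  have : y - φ x = 0 := hb0
  exact sub_eq_zero.mp this
end

section
/- Let δ : M_{m,n}(ℂ) → M_{m,n}(ℂ) be a ℂ-linear map which is a derivation with respect to triple matrix multiplication, i.e., δ(AB*C) = δ(A)B*C + Aδ(B)*C + AB*δ(C) for all A, B, C ∈ M_{m,n}(ℂ). Then δ is a finite sum of derivations of the form X ↦ AX + XB, where A ∈ M_m(ℂ) with A* = −A and B ∈ M_n(ℂ) with B* = −B. -/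
open scoped Matrix
open Matrix

private lemma key_triple (m n : ℕ)
    (δ : Matrix (Fin (m+1)) (Fin (n+1)) ℂ →ₗ[ℂ] Matrix (Fin (m+1)) (Fin (n+1)) ℂ)
    (hδ : ∀ A B C : Matrix (Fin (m+1)) (Fin (n+1)) ℂ,
      δ (A * Bᴴ * C) = δ A * Bᴴ * C + A * (δ B)ᴴ * C + A * Bᴴ * δ C) :
    ∃ (A : Matrix (Fin (m+1)) (Fin (m+1)) ℂ) (B : Matrix (Fin (n+1)) (Fin (n+1)) ℂ),
      Aᴴ = -A ∧ Bᴴ = -B ∧ ∀ X, δ X = A * X + X * B := by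
  set e : Fin (m+1) → Fin (n+1) → Matrix (Fin (m+1)) (Fin (n+1)) ℂ :=
    fun p q => Matrix.single p q 1 with he
  set A₀ : Matrix (Fin (m+1)) (Fin (m+1)) ℂ :=
    Matrix.of fun i q => δ (e q 0) i 0 with hA₀
  set B₀ : Matrix (Fin (n+1)) (Fin (n+1)) ℂ :=
    Matrix.of fun v j => δ (e 0 v) 0 j with hB₀
  set c : ℂ := star (δ (e 0 0) 0 0) with hc
  have step1 : ∀ p u, δ (e p u) = A₀ * e p u + e p u * B₀ + c • e p u := by
    intro p u
    have h := hδ (e p 0) (e 0 0) (e 0 u)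
    have hp : e p 0 * (e 0 0)ᴴ * e 0 u = e p u := by
      ext i j
      simp [he, Matrix.mul_apply, Matrix.single, Matrix.conjTranspose_apply,
        ite_and, mul_ite, ite_mul]
      split_ifs <;> ring
    rw [hp] at h
    rw [h]
    ext i j
    simp [he, hA₀, hB₀, hc, Matrix.mul_apply, Matrix.single,
      Matrix.conjTranspose_apply, ite_and, mul_ite, ite_mul]
    split_ifs <;> ring
  have hsm : ∀ (p : Fin (m+1)) (u : Fin (n+1)) (a : ℂ),
      Matrix.single p u a = a • e p u := by
    intro p u a; simp [he]
  have step2 : ∀ X, δ X = A₀ * X + X * B₀ + c • X := by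
    intro X
    conv_lhs => rw [matrix_eq_sum_single X]
    rw [map_sum]
    simp only [map_sum, hsm, _root_.map_smul, step1]
    ext i j
    simp only [Matrix.sum_apply, Matrix.smul_apply, Matrix.add_apply, Matrix.mul_apply,
      he, Matrix.single, Matrix.of_apply, ite_and, mul_ite, ite_mul,
      mul_zero, zero_mul, mul_one, one_mul, smul_eq_mul, Finset.sum_ite_eq,
      Finset.sum_ite_eq', Finset.mem_univ, if_true, mul_add, Finset.sum_add_distrib]
    rw [Finset.sum_comm]
    simp [Finset.sum_ite_eq, Finset.sum_ite_eq', mul_comm, mul_add]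
  -- A' and the skewness constraints
  set A' : Matrix (Fin (m+1)) (Fin (m+1)) ℂ := A₀ + c • (1 : Matrix (Fin (m+1)) (Fin (m+1)) ℂ) with hA'
  have step2' : ∀ X, δ X = A' * X + X * B₀ := by
    intro X
    rw [step2, hA', Matrix.add_mul, Matrix.smul_mul, Matrix.one_mul]
    abel
  have rel : ∀ (u s : Fin (n+1)) (r v : Fin (m+1)),
      (B₀ + B₀ᴴ) u s * (if r = v then (1:ℂ) else 0)
        + (if u = s then (1:ℂ) else 0) * (A' + A'ᴴ) r v = 0 := by
    intro u s r v
    have h := hδ (e 0 u) (e r s) (e v 0)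
    rw [step2' (e 0 u * (e r s)ᴴ * e v 0), step2' (e 0 u), step2' (e r s),
      step2' (e v 0)] at h
    rw [Matrix.conjTranspose_add, Matrix.conjTranspose_mul, Matrix.conjTranspose_mul] at h
    have h00 : (A' * (e 0 u * (e r s)ᴴ * e v 0) + (e 0 u * (e r s)ᴴ * e v 0) * B₀) 0 0
        = ((A' * e 0 u + e 0 u * B₀) * (e r s)ᴴ * e v 0
          + e 0 u * ((e r s)ᴴ * A'ᴴ + B₀ᴴ * (e r s)ᴴ) * e v 0
          + e 0 u * (e r s)ᴴ * (A' * e v 0 + e v 0 * B₀)) 0 0 := by rw [h]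
    by_cases hrv : r = v <;> by_cases hus : u = s <;>
      simp [Matrix.add_apply, Matrix.mul_apply, Matrix.conjTranspose_apply,
        he, Matrix.single, Matrix.of_apply, ite_and, mul_ite, ite_mul,
        star_mul', apply_ite (star : ℂ → ℂ), Finset.sum_ite_eq, Finset.sum_ite_eq',
        Finset.sum_add_distrib, @eq_comm _ s u, @eq_comm _ v r, hrv, hus] at h00 ⊢ <;>
      first
      | linear_combination h00
      | linear_combination -h00
  have rel' : ∀ (u s : Fin (n+1)) (r v : Fin (m+1)),
      (B₀ u s + star (B₀ s u)) * (if r = v then (1:ℂ) else 0)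
        + (if u = s then (1:ℂ) else 0) * (A' r v + star (A' v r)) = 0 := by
    intro u s r v
    simpa [Matrix.add_apply, Matrix.conjTranspose_apply] using rel u s r v
  have hT : ∀ r v, A' r v + star (A' v r)
      = -(B₀ 0 0 + star (B₀ 0 0)) * (if r = v then (1:ℂ) else 0) := by
    intro r v
    have h1 := rel' 0 0 r v
    simp only [if_pos rfl, if_true, eq_self_iff_true, one_mul] at h1
    linear_combination h1
  have hS : ∀ u s, B₀ u s + star (B₀ s u)
      = (B₀ 0 0 + star (B₀ 0 0)) * (if u = s then (1:ℂ) else 0) := by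
    intro u s
    have h1 := rel' u s 0 0
    have h2 := hT 0 0
    simp only [if_pos rfl, if_true, eq_self_iff_true, one_mul, mul_one] at h1 h2
    linear_combination h1 - (if u = s then (1:ℂ) else 0) * h2
  have hreal : star (B₀ 0 0 + star (B₀ 0 0)) = B₀ 0 0 + star (B₀ 0 0) := by
    simp [star_add, add_comm]
  refine ⟨A' + ((B₀ 0 0 + star (B₀ 0 0))/2) • 1, B₀ - ((B₀ 0 0 + star (B₀ 0 0))/2) • 1,
    ?_, ?_, ?_⟩
  · ext r v
    simp only [Matrix.conjTranspose_apply, Matrix.add_apply, Matrix.neg_apply,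
      Matrix.smul_apply, Matrix.one_apply, smul_eq_mul, star_add, star_mul',
      apply_ite (star : ℂ → ℂ), star_one, star_zero, star_div₀, hreal,
      @eq_comm _ v r, star_ofNat]
    linear_combination hT r v
  · ext u s
    simp only [Matrix.conjTranspose_apply, Matrix.sub_apply, Matrix.neg_apply,
      Matrix.smul_apply, Matrix.one_apply, smul_eq_mul, star_sub, star_mul',
      apply_ite (star : ℂ → ℂ), star_one, star_zero, star_div₀, hreal,
      @eq_comm _ s u, star_ofNat]
    linear_combination hS u s
  · intro X
    rw [step2' X]
    simp only [Matrix.add_mul, Matrix.sub_mul, Matrix.mul_sub, Matrix.smul_mul,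
      Matrix.one_mul, Matrix.mul_smul, Matrix.mul_one]
    abel


/-- Every derivation of `M_{m,n}(ℂ)` with respect to the triple matrix multiplication
`(A, B, C) ↦ AB*C` is a finite sum of derivations of the form `X ↦ AX + XB` with
`A* = −A` and `B* = −B`. -/
theorem triple_matrix_derivation (m n : ℕ)
    (δ : Matrix (Fin m) (Fin n) ℂ →ₗ[ℂ] Matrix (Fin m) (Fin n) ℂ)
    (hδ : ∀ A B C : Matrix (Fin m) (Fin n) ℂ,
      δ (A * Bᴴ * C) = δ A * Bᴴ * C + A * (δ B)ᴴ * C + A * Bᴴ * δ C) :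
    ∃ (k : ℕ) (A : Fin k → Matrix (Fin m) (Fin m) ℂ)
      (B : Fin k → Matrix (Fin n) (Fin n) ℂ),
      (∀ i, (A i)ᴴ = -(A i)) ∧ (∀ i, (B i)ᴴ = -(B i)) ∧
      ∀ X, δ X = ∑ i, (A i * X + X * B i) := by
  rcases m with _ | m
  · refine ⟨0, Fin.elim0, Fin.elim0, fun i => i.elim0, fun i => i.elim0, fun X => ?_⟩
    ext i j
    exact i.elim0
  rcases n with _ | n
  · refine ⟨0, Fin.elim0, Fin.elim0, fun i => i.elim0, fun i => i.elim0, fun X => ?_⟩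
    ext i j
    exact j.elim0
  obtain ⟨A, B, hA, hB, hAB⟩ := key_triple m n δ hδ
  exact ⟨1, fun _ => A, fun _ => B, fun _ => hA, fun _ => hB,
    fun X => by simpa [Fin.sum_univ_one] using hAB X⟩
end

section
/- Equip M_{m,n}(ℂ) with the triple circle product {A, B, C} = (AB*C + CB*A)/2. Let δ : M_{m,n}(ℂ) → M_{m,n}(ℂ) be a ℂ-linear map which is a derivation with respect to this product, i.e., δ({A, B, C}) = {δ(A), B, C} + {A, δ(B), C} + {A, B, δ(C)} for all A, B, C. Then δ is a finite sum of inner derivations of the form δ_{A,B}(X) = {A, B, X} − {B, A, X} with A, B ∈ M_{m,n}(ℂ). -/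
open scoped Matrix
open Matrix Finset

noncomputable def tripleCircle {m n : ℕ} (A B C : Matrix (Fin m) (Fin n) ℂ) :
    Matrix (Fin m) (Fin n) ℂ :=
  (2⁻¹ : ℂ) • (A * Bᴴ * C + C * Bᴴ * A)

namespace TCD

variable {m n : ℕ}

noncomputable abbrev E (p : Fin m) (q : Fin n) : Matrix (Fin m) (Fin n) ℂ :=
  Matrix.single p q 1

def IsDer (δ : Matrix (Fin m) (Fin n) ℂ →ₗ[ℂ] Matrix (Fin m) (Fin n) ℂ) : Prop :=
  ∀ A B C : Matrix (Fin m) (Fin n) ℂ,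
      δ (tripleCircle A B C) =
        tripleCircle (δ A) B C + tripleCircle A (δ B) C + tripleCircle A B (δ C)

lemma E_apply (p : Fin m) (q : Fin n) (i j) :
    E p q i j = if i = p ∧ j = q then 1 else 0 := by
  simp [Matrix.single, and_comm, eq_comm]

lemma key (A C : Matrix (Fin m) (Fin n) ℂ) (p : Fin m) (q : Fin n) (i : Fin m) (j : Fin n) :
    (A * (E p q)ᴴ * C) i j = A i q * C p j := by
  have h : (E p q)ᴴ = Matrix.single q p 1 := by
    ext a b
    simp [conjTranspose_apply, Matrix.single, and_comm]
  rw [h]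
  simp [mul_apply, Matrix.single, mul_ite, ite_mul, ite_and, Finset.sum_ite_eq,
    Finset.sum_ite_eq', eq_comm]

lemma key2 (M : Matrix (Fin m) (Fin n) ℂ) (p r : Fin m) (q s : Fin n) (i : Fin m) (j : Fin n) :
    (E p q * Mᴴ * E r s) i j =
      if i = p ∧ j = s then (starRingEnd ℂ) (M r q) else 0 := by
  simp [mul_apply, Matrix.single, conjTranspose_apply, mul_ite, ite_mul, ite_and, eq_comm]
  split <;> simp_all

lemma tc_apply (A B C : Matrix (Fin m) (Fin n) ℂ) (i j) :
    tripleCircle A B C i j = 2⁻¹ * ((A * Bᴴ * C) i j + (C * Bᴴ * A) i j) := by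
  simp [tripleCircle]

lemma tc_mid (A C : Matrix (Fin m) (Fin n) ℂ) (p : Fin m) (q : Fin n) (i j) :
    tripleCircle A (E p q) C i j = 2⁻¹ * (A i q * C p j + C i q * A p j) := by
  rw [tc_apply, key, key]

lemma tc_out (M : Matrix (Fin m) (Fin n) ℂ) (p r : Fin m) (q s : Fin n) (i j) :
    tripleCircle (E p q) M (E r s) i j =
      2⁻¹ * ((if i = p ∧ j = s then (starRingEnd ℂ) (M r q) else 0) +
        (if i = r ∧ j = q then (starRingEnd ℂ) (M p s) else 0)) := by
  rw [tc_apply, key2, key2]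

lemma tcu1 (p : Fin m) (q : Fin n) : tripleCircle (E p q) (E p q) (E p q) = E p q := by
  ext i j
  simp only [tc_mid, E_apply]
  split_ifs <;> simp_all <;> norm_num

lemma tcu2 (p : Fin m) {q s : Fin n} (h : q ≠ s) :
    tripleCircle (E p q) (E p q) (E p s) = (2⁻¹ : ℂ) • E p s := by
  ext i j
  simp only [Matrix.smul_apply, tc_mid, E_apply]
  split_ifs <;> simp_all <;> norm_num

lemma tcu3 {p r : Fin m} (q : Fin n) (h : p ≠ r) :
    tripleCircle (E p q) (E p q) (E r q) = (2⁻¹ : ℂ) • E r q := by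
  ext i j
  simp only [Matrix.smul_apply, tc_mid, E_apply]
  split_ifs <;> simp_all <;> norm_num

lemma tcu4 {p r : Fin m} {q s : Fin n} (hpr : p ≠ r) (hqs : q ≠ s) :
    tripleCircle (E p q) (E p s) (E r s) = (2⁻¹ : ℂ) • E r q := by
  ext i j
  simp only [Matrix.smul_apply, tc_mid, E_apply]
  split_ifs <;> simp_all <;> norm_num

section Facts

variable (δ : Matrix (Fin m) (Fin n) ℂ →ₗ[ℂ] Matrix (Fin m) (Fin n) ℂ) (hδ : IsDer δ)

include hδ

lemma supp (p : Fin m) (q : Fin n) (i j) (hi : i ≠ p) (hj : j ≠ q) :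
    δ (E p q) i j = 0 := by
  have h := hδ (E p q) (E p q) (E p q)
  rw [tcu1] at h
  have h2 := congrFun (congrFun h i) j
  rw [Matrix.add_apply, Matrix.add_apply, tc_mid, tc_out, tc_mid] at h2
  simp only [E_apply] at h2
  simp [hi, hj] at h2
  exact h2

lemma imag (p : Fin m) (q : Fin n) :
    (starRingEnd ℂ) (δ (E p q) p q) = - δ (E p q) p q := by
  have h := hδ (E p q) (E p q) (E p q)
  rw [tcu1] at h
  have h2 := congrFun (congrFun h p) q
  rw [Matrix.add_apply, Matrix.add_apply, tc_mid, tc_out, tc_mid] at h2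
  simp only [E_apply] at h2
  simp at h2
  linear_combination -h2

lemma qind (p : Fin m) (q s : Fin n) (i : Fin m) (hi : i ≠ p) :
    δ (E p s) i s = δ (E p q) i q := by
  rcases eq_or_ne q s with rfl | hqs
  · rfl
  have h := hδ (E p q) (E p q) (E p s)
  rw [tcu2 p hqs, _root_.map_smul] at h
  have h2 := congrFun (congrFun h i) s
  rw [Matrix.smul_apply, Matrix.add_apply, Matrix.add_apply, tc_mid, tc_out, tc_mid] at h2
  simp only [E_apply] at h2
  simp [hi, hqs, Ne.symm hqs] at h2
  exact h2

lemma qskew (p : Fin m) {q s : Fin n} (h : q ≠ s) :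
    δ (E p s) p q = - (starRingEnd ℂ) (δ (E p q) p s) := by
  have h1 := hδ (E p q) (E p q) (E p s)
  rw [tcu2 p h, _root_.map_smul] at h1
  have h2 := congrFun (congrFun h1 p) q
  rw [Matrix.smul_apply, Matrix.add_apply, Matrix.add_apply, tc_mid, tc_out, tc_mid] at h2
  simp only [E_apply] at h2
  simp [h, Ne.symm h] at h2
  linear_combination (-2:ℂ) * h2

lemma pind (p r : Fin m) (q : Fin n) (j : Fin n) (hj : j ≠ q) :
    δ (E r q) r j = δ (E p q) p j := by
  rcases eq_or_ne p r with rfl | hpr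
  · rfl
  have h := hδ (E p q) (E p q) (E r q)
  rw [tcu3 q hpr, _root_.map_smul] at h
  have h2 := congrFun (congrFun h r) j
  rw [Matrix.smul_apply, Matrix.add_apply, Matrix.add_apply, tc_mid, tc_out, tc_mid] at h2
  simp only [E_apply] at h2
  simp [hj, hpr, Ne.symm hpr] at h2
  exact h2

lemma pskew {p r : Fin m} (q : Fin n) (h : p ≠ r) :
    δ (E r q) p q = - (starRingEnd ℂ) (δ (E p q) r q) := by
  have h1 := hδ (E p q) (E p q) (E r q)
  rw [tcu3 q h, _root_.map_smul] at h1
  have h2 := congrFun (congrFun h1 p) q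
  rw [Matrix.smul_apply, Matrix.add_apply, Matrix.add_apply, tc_mid, tc_out, tc_mid] at h2
  simp only [E_apply] at h2
  simp [h, Ne.symm h] at h2
  linear_combination (-2:ℂ) * h2

lemma gammarel {p r : Fin m} {q s : Fin n} (hpr : p ≠ r) (hqs : q ≠ s) :
    δ (E r q) r q =
      δ (E p q) p q + (starRingEnd ℂ) (δ (E p s) p s) + δ (E r s) r s := by
  have h := hδ (E p q) (E p s) (E r s)
  rw [tcu4 hpr hqs, _root_.map_smul] at h
  have h2 := congrFun (congrFun h r) q
  rw [Matrix.smul_apply, Matrix.add_apply, Matrix.add_apply, tc_mid, tc_out, tc_mid] at h2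
  simp only [E_apply] at h2
  simp [hpr, Ne.symm hpr, hqs, Ne.symm hqs] at h2
  linear_combination (2:ℂ) * h2

end Facts

lemma mul_E_apply {k : ℕ} (M : Matrix (Fin k) (Fin m) ℂ) (p : Fin m) (q : Fin n)
    (a : Fin k) (b : Fin n) :
    (M * Matrix.single p q (1:ℂ)) a b = if b = q then M a p else 0 := by
  simp [mul_apply, Matrix.single, mul_ite, ite_mul, ite_and, Finset.sum_ite_eq,
    Finset.sum_ite_eq', eq_comm]

lemma E_mul_apply {k : ℕ} (M : Matrix (Fin n) (Fin k) ℂ) (p : Fin m) (q : Fin n)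
    (a : Fin m) (b : Fin k) :
    (Matrix.single p q (1:ℂ) * M) a b = if a = p then M q b else 0 := by
  simp [mul_apply, Matrix.single, mul_ite, ite_mul, ite_and, Finset.sum_ite_eq,
    Finset.sum_ite_eq', eq_comm]

lemma exists_PQ {m n : ℕ}
    (δ : Matrix (Fin (m+1)) (Fin (n+1)) ℂ →ₗ[ℂ] Matrix (Fin (m+1)) (Fin (n+1)) ℂ)
    (hδ : IsDer δ) :
    ∃ (P : Matrix (Fin (m+1)) (Fin (m+1)) ℂ) (Q : Matrix (Fin (n+1)) (Fin (n+1)) ℂ),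
      Pᴴ = -P ∧ Qᴴ = -Q ∧ ∀ X, δ X = P * X + X * Q := by
  obtain ⟨P, hP⟩ : ∃ P : Matrix (Fin (m+1)) (Fin (m+1)) ℂ, ∀ i p, P i p =
      if i = p then δ (E p 0) p 0 - δ (E 0 0) 0 0 / 2 else δ (E p 0) i 0 :=
    ⟨Matrix.of fun i p => if i = p then δ (E p 0) p 0 - δ (E 0 0) 0 0 / 2
      else δ (E p 0) i 0, fun _ _ => rfl⟩
  obtain ⟨Q, hQ⟩ : ∃ Q : Matrix (Fin (n+1)) (Fin (n+1)) ℂ, ∀ q j, Q q j =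
      if q = j then δ (E 0 q) 0 q - δ (E 0 0) 0 0 / 2 else δ (E 0 q) 0 j :=
    ⟨Matrix.of fun q j => if q = j then δ (E 0 q) 0 q - δ (E 0 0) 0 0 / 2
      else δ (E 0 q) 0 j, fun _ _ => rfl⟩
  refine ⟨P, Q, ?_, ?_, ?_⟩
  · ext a b
    simp only [conjTranspose_apply, Matrix.neg_apply, hP]
    rcases eq_or_ne b a with rfl | hba
    · have h0 := imag δ hδ b 0
      have h1 := imag δ hδ 0 0
      simp only [eq_self_iff_true, if_true, Complex.star_def, map_sub, map_div₀,
        map_ofNat, h0, h1]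
      ring
    · simp only [if_neg hba, if_neg (Ne.symm hba)]
      rw [pskew δ hδ 0 hba]
      simp
  · ext a b
    simp only [conjTranspose_apply, Matrix.neg_apply, hQ]
    rcases eq_or_ne b a with rfl | hba
    · have h0 := imag δ hδ 0 b
      have h1 := imag δ hδ 0 0
      simp only [eq_self_iff_true, if_true, Complex.star_def, map_sub, map_div₀,
        map_ofNat, h0, h1]
      ring
    · simp only [if_neg hba, if_neg (Ne.symm hba)]
      rw [qskew δ hδ 0 hba]
      simp
  · have hD : ∀ (p : Fin (m+1)) (q : Fin (n+1)),
        δ (E p q) = P * E p q + E p q * Q := by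
      intro p q
      ext i j
      rw [Matrix.add_apply, mul_E_apply, E_mul_apply, hP, hQ]
      by_cases hip : i = p <;> by_cases hjq : j = q
      · subst hip; subst hjq
        simp only [eq_self_iff_true, if_true]
        have hg : δ (E i j) i j = δ (E i 0) i 0 + δ (E 0 j) 0 j - δ (E 0 0) 0 0 := by
          rcases eq_or_ne i 0 with rfl | hi0
          · ring_nf
          · rcases eq_or_ne j 0 with rfl | hj0
            · ring_nf
            · have hg1 := gammarel δ hδ (p := 0) (r := i) (q := j) (s := 0)
                (Ne.symm hi0) hj0
              have h1 := imag δ hδ 0 0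
              linear_combination hg1 + h1
        rw [hg]; ring
      · subst hip
        simp only [eq_self_iff_true, if_true, if_neg hjq, if_neg (Ne.symm hjq), zero_add]
        exact pind δ hδ 0 i q j hjq
      · subst hjq
        simp only [eq_self_iff_true, if_true, if_neg hip, add_zero]
        exact (qind δ hδ p j 0 i hip).symm
      · simp only [if_neg hip, if_neg hjq, add_zero, zero_add]
        exact supp δ hδ p q i j hip hjq
    intro X
    have hrep : X = ∑ p : Fin (m+1), ∑ q : Fin (n+1), X p q • E p q := by
      conv_lhs => rw [matrix_eq_sum_single X]
      refine Finset.sum_congr rfl fun p _ => Finset.sum_congr rfl fun q _ => ?_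
      rw [smul_single, smul_eq_mul, mul_one]
    conv_lhs => rw [hrep]
    conv_rhs => rw [hrep]
    rw [map_sum]
    simp only [map_sum, _root_.map_smul, hD, Matrix.mul_sum, Matrix.sum_mul,
      Matrix.mul_smul, Matrix.smul_mul, smul_add, Finset.sum_add_distrib]

lemma inner_eq {m n : ℕ} (A B X : Matrix (Fin m) (Fin n) ℂ) :
    tripleCircle A B X - tripleCircle B A X =
      (2⁻¹:ℂ) • ((A * Bᴴ - B * Aᴴ) * X + X * (Bᴴ * A - Aᴴ * B)) := by
  simp only [tripleCircle, Matrix.sub_mul, Matrix.mul_sub, Matrix.add_mul, Matrix.mul_add,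
    smul_sub, smul_add, Matrix.mul_assoc]
  abel

lemma E00_conj {k : ℕ} : (Matrix.single (0 : Fin (k+1)) (0 : Fin (k+1)) (1:ℂ))ᴴ =
    Matrix.single 0 0 1 := by
  ext a b
  simp [conjTranspose_apply, Matrix.single, and_comm]

lemma trace_E00 {k : ℕ} : trace (Matrix.single (0 : Fin (k+1)) (0 : Fin (k+1)) (1:ℂ)) = 1 := by
  simp [Matrix.trace, Matrix.diag, Matrix.single]

lemma conj_trace_of_skew {k : ℕ} (M : Matrix (Fin k) (Fin k) ℂ) (h : Mᴴ = -M) :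
    (starRingEnd ℂ) (trace M) = -trace M := by
  have := trace_conjTranspose M
  rw [h, trace_neg] at this
  exact this.symm

lemma stdC' {m n : ℕ} (p : Fin m) (q : Fin n) :
    (Matrix.single p q (1:ℂ))ᴴ = Matrix.single q p 1 := by
  ext a b
  simp [conjTranspose_apply, Matrix.single, and_comm]

lemma repr_lemma {m n : ℕ} (P : Matrix (Fin (m+1)) (Fin (m+1)) ℂ)
    (Q : Matrix (Fin (n+1)) (Fin (n+1)) ℂ) (hP : Pᴴ = -P) (hQ : Qᴴ = -Q) :
    ∃ (k : ℕ) (A B : Fin k → Matrix (Fin (m+1)) (Fin (n+1)) ℂ),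
      ∀ X, P * X + X * Q =
        ∑ i, (tripleCircle (A i) (B i) X - tripleCircle (B i) (A i) X) := by
  have hne : ((m:ℂ) + (n:ℂ) + 2) ≠ 0 := by
    have h1 : ((m + n + 2 : ℕ) : ℂ) ≠ 0 := Nat.cast_ne_zero.mpr (by omega)
    push_cast at h1
    convert h1 using 2
  set T0 : ℂ := (trace Q - trace P) / ((m:ℂ) + (n:ℂ) + 2) with hT0
  have hT0c : star T0 = -T0 := by
    show (starRingEnd ℂ) T0 = -T0
    rw [hT0, map_div₀, map_sub, conj_trace_of_skew Q hQ, conj_trace_of_skew P hP]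
    have h5 : (starRingEnd ℂ) ((m:ℂ) + (n:ℂ) + 2) = ((m:ℂ) + (n:ℂ) + 2) := by
      rw [map_add, map_add, Complex.conj_natCast, Complex.conj_natCast, Complex.conj_ofNat]
    rw [h5]
    ring
  set P' : Matrix (Fin (m+1)) (Fin (m+1)) ℂ := P + T0 • 1 with hP'
  set Q' : Matrix (Fin (n+1)) (Fin (n+1)) ℂ := Q - T0 • 1 with hQ'
  have hP's : P'ᴴ = -P' := by
    rw [hP', conjTranspose_add, conjTranspose_smul, conjTranspose_one, hP, hT0c]
    module
  have hQ's : Q'ᴴ = -Q' := by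
    rw [hQ', conjTranspose_sub, conjTranspose_smul, conjTranspose_one, hQ, hT0c]
    module
  set τ : ℂ := trace P' with hτ
  have hτQ : trace Q' = τ := by
    rw [hτ, hP', hQ', trace_add, trace_sub, trace_smul, trace_smul, trace_one]
    simp only [smul_eq_mul, trace_one, Fintype.card_fin, Nat.cast_add, Nat.cast_one]
    rw [hT0]
    field_simp
    ring
  have hτc : (starRingEnd ℂ) τ = -τ := conj_trace_of_skew P' hP's
  have hτ2 : star ((τ:ℂ)/2) = -(τ/2) := by
    show (starRingEnd ℂ) (τ/2) = -(τ/2)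
    rw [map_div₀, hτc, Complex.conj_ofNat]
    ring
  set S : Matrix (Fin (m+1)) (Fin (m+1)) ℂ :=
    P' - (τ/2) • Matrix.single 0 0 1 with hS
  set T : Matrix (Fin (n+1)) (Fin (n+1)) ℂ :=
    Q' - (τ/2) • Matrix.single 0 0 1 with hT
  have hSs : Sᴴ = -S := by
    rw [hS, conjTranspose_sub, conjTranspose_smul, E00_conj, hP's, hτ2]
    module
  have hTs : Tᴴ = -T := by
    rw [hT, conjTranspose_sub, conjTranspose_smul, E00_conj, hQ's, hτ2]
    module
  have htrS : trace S = τ/2 := by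
    rw [hS, trace_sub, trace_smul, trace_E00, ← hτ]
    simp only [smul_eq_mul, mul_one]
    ring
  have htrT : trace T = τ/2 := by
    rw [hT, trace_sub, trace_smul, trace_E00, hτQ]
    simp only [smul_eq_mul, mul_one]
    ring
  refine ⟨(m+1) + (n+1),
    Fin.addCases (fun r => (Matrix.of fun a b => if b = 0 then S a r else 0 : Matrix (Fin (m+1)) (Fin (n+1)) ℂ))
      (fun s => (Matrix.of fun a b => if a = 0 then T s b else 0 : Matrix (Fin (m+1)) (Fin (n+1)) ℂ)),
    Fin.addCases (fun r => Matrix.single r (0 : Fin (n+1)) (1:ℂ)) (fun s => Matrix.single (0 : Fin (m+1)) s (1:ℂ)), ?_⟩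
  intro X
  simp only [inner_eq]
  rw [← Finset.smul_sum, Finset.sum_add_distrib, ← Matrix.sum_mul, ← Matrix.mul_sum]
  rw [Fin.sum_univ_add (a := m+1) (b := n+1), Fin.sum_univ_add (a := m+1) (b := n+1)]
  simp only [Fin.addCases_left, Fin.addCases_right]
  have hcol1 : (∑ r : Fin (m+1),
      (((Matrix.of fun a b => if b = 0 then S a r else 0 : Matrix (Fin (m+1)) (Fin (n+1)) ℂ)) * (Matrix.single r (0 : Fin (n+1)) (1:ℂ))ᴴ -
        Matrix.single r (0 : Fin (n+1)) (1:ℂ) * ((Matrix.of fun a b => if b = 0 then S a r else 0 : Matrix (Fin (m+1)) (Fin (n+1)) ℂ))ᴴ)) =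
      (2:ℂ) • S := by
    ext a b
    rw [Matrix.sum_apply]
    have hterm : ∀ r : Fin (m+1),
        (((Matrix.of fun a b => if b = 0 then S a r else 0 : Matrix (Fin (m+1)) (Fin (n+1)) ℂ)) * (Matrix.single r (0 : Fin (n+1)) (1:ℂ))ᴴ -
          Matrix.single r (0 : Fin (n+1)) (1:ℂ) * ((Matrix.of fun a b => if b = 0 then S a r else 0 : Matrix (Fin (m+1)) (Fin (n+1)) ℂ))ᴴ) a b
        = (if b = r then S a r else 0) - (if a = r then star (S b r) else 0) := by
      intro r
      rw [Matrix.sub_apply, stdC', mul_E_apply, E_mul_apply]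
      simp [conjTranspose_apply]
    rw [Finset.sum_congr rfl fun r _ => hterm r, Finset.sum_sub_distrib]
    simp only [Finset.sum_ite_eq, Finset.sum_ite_eq', Finset.mem_univ, if_true]
    have hconj : star (S b a) = - S a b := by
      have h2 := congrFun (congrFun hSs a) b
      simpa [conjTranspose_apply] using h2
    rw [hconj, Matrix.smul_apply, smul_eq_mul]
    ring
  have hrow1 : (∑ s : Fin (n+1),
      (((Matrix.of fun a b => if a = 0 then T s b else 0 : Matrix (Fin (m+1)) (Fin (n+1)) ℂ)) * (Matrix.single (0 : Fin (m+1)) s (1:ℂ))ᴴ -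
        Matrix.single (0 : Fin (m+1)) s (1:ℂ) * ((Matrix.of fun a b => if a = 0 then T s b else 0 : Matrix (Fin (m+1)) (Fin (n+1)) ℂ))ᴴ)) =
      τ • Matrix.single 0 0 1 := by
    ext a b
    rw [Matrix.sum_apply]
    have hterm : ∀ s : Fin (n+1),
        (((Matrix.of fun a b => if a = 0 then T s b else 0 : Matrix (Fin (m+1)) (Fin (n+1)) ℂ)) * (Matrix.single (0 : Fin (m+1)) s (1:ℂ))ᴴ -
          Matrix.single (0 : Fin (m+1)) s (1:ℂ) * ((Matrix.of fun a b => if a = 0 then T s b else 0 : Matrix (Fin (m+1)) (Fin (n+1)) ℂ))ᴴ) a b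
        = (if a = 0 ∧ b = 0 then T s s - star (T s s) else 0) := by
      intro s
      rw [Matrix.sub_apply, stdC', mul_E_apply, E_mul_apply]
      by_cases ha : a = (0 : Fin (m+1)) <;> by_cases hb : b = (0 : Fin (m+1)) <;>
        simp [ha, hb, conjTranspose_apply]
    rw [Finset.sum_congr rfl fun s _ => hterm s]
    by_cases ha : a = (0 : Fin (m+1)) <;> by_cases hb : b = (0 : Fin (m+1))
    · subst ha; subst hb
      simp only [and_self, if_true, eq_self_iff_true]
      rw [Finset.sum_sub_distrib]
      have e1 : (∑ s : Fin (n+1), T s s) = trace T := by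
        simp [Matrix.trace, Matrix.diag]
      have e2 : (∑ s : Fin (n+1), star (T s s)) = star (trace T) := by
        rw [← e1, star_sum]
      rw [e1, e2, htrT, hτ2]
      simp [Matrix.single]
      try ring
    · simp [ha, hb, Matrix.single, eq_comm]
    · simp [ha, hb, Matrix.single, eq_comm]
    · simp [ha, hb, Matrix.single, eq_comm]
  have hcol2 : (∑ r : Fin (m+1),
      ((Matrix.single r (0 : Fin (n+1)) (1:ℂ))ᴴ * ((Matrix.of fun a b => if b = 0 then S a r else 0 : Matrix (Fin (m+1)) (Fin (n+1)) ℂ)) -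
        ((Matrix.of fun a b => if b = 0 then S a r else 0 : Matrix (Fin (m+1)) (Fin (n+1)) ℂ))ᴴ * Matrix.single r (0 : Fin (n+1)) (1:ℂ))) =
      τ • Matrix.single 0 0 1 := by
    ext a b
    rw [Matrix.sum_apply]
    have hterm : ∀ r : Fin (m+1),
        ((Matrix.single r (0 : Fin (n+1)) (1:ℂ))ᴴ * ((Matrix.of fun a b => if b = 0 then S a r else 0 : Matrix (Fin (m+1)) (Fin (n+1)) ℂ)) -
          ((Matrix.of fun a b => if b = 0 then S a r else 0 : Matrix (Fin (m+1)) (Fin (n+1)) ℂ))ᴴ * Matrix.single r (0 : Fin (n+1)) (1:ℂ)) a b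
        = (if a = 0 ∧ b = 0 then S r r - star (S r r) else 0) := by
      intro r
      rw [Matrix.sub_apply, stdC', mul_E_apply, E_mul_apply]
      by_cases ha : a = (0 : Fin (n+1)) <;> by_cases hb : b = (0 : Fin (n+1)) <;>
        simp [ha, hb, conjTranspose_apply]
    rw [Finset.sum_congr rfl fun r _ => hterm r]
    by_cases ha : a = (0 : Fin (n+1)) <;> by_cases hb : b = (0 : Fin (n+1))
    · subst ha; subst hb
      simp only [and_self, if_true, eq_self_iff_true]
      rw [Finset.sum_sub_distrib]
      have e1 : (∑ r : Fin (m+1), S r r) = trace S := by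
        simp [Matrix.trace, Matrix.diag]
      have e2 : (∑ r : Fin (m+1), star (S r r)) = star (trace S) := by
        rw [← e1, star_sum]
      rw [e1, e2, htrS, hτ2]
      simp [Matrix.single]
      try ring
    · simp [ha, hb, Matrix.single, eq_comm]
    · simp [ha, hb, Matrix.single, eq_comm]
    · simp [ha, hb, Matrix.single, eq_comm]
  have hrow2 : (∑ s : Fin (n+1),
      ((Matrix.single (0 : Fin (m+1)) s (1:ℂ))ᴴ * ((Matrix.of fun a b => if a = 0 then T s b else 0 : Matrix (Fin (m+1)) (Fin (n+1)) ℂ)) -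
        ((Matrix.of fun a b => if a = 0 then T s b else 0 : Matrix (Fin (m+1)) (Fin (n+1)) ℂ))ᴴ * Matrix.single (0 : Fin (m+1)) s (1:ℂ))) =
      (2:ℂ) • T := by
    ext a b
    rw [Matrix.sum_apply]
    have hterm : ∀ s : Fin (n+1),
        ((Matrix.single (0 : Fin (m+1)) s (1:ℂ))ᴴ * ((Matrix.of fun a b => if a = 0 then T s b else 0 : Matrix (Fin (m+1)) (Fin (n+1)) ℂ)) -
          ((Matrix.of fun a b => if a = 0 then T s b else 0 : Matrix (Fin (m+1)) (Fin (n+1)) ℂ))ᴴ * Matrix.single (0 : Fin (m+1)) s (1:ℂ)) a b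
        = (if a = s then T s b else 0) - (if b = s then star (T s a) else 0) := by
      intro s
      rw [Matrix.sub_apply, stdC', mul_E_apply, E_mul_apply]
      simp [conjTranspose_apply]
    rw [Finset.sum_congr rfl fun s _ => hterm s, Finset.sum_sub_distrib]
    simp only [Finset.sum_ite_eq, Finset.sum_ite_eq', Finset.mem_univ, if_true]
    have hconj : star (T b a) = - T a b := by
      have h2 := congrFun (congrFun hTs a) b
      simpa [conjTranspose_apply] using h2
    rw [hconj, Matrix.smul_apply, smul_eq_mul]
    ring
  rw [hcol1, hrow1, hcol2, hrow2]
  have e1 : (2:ℂ) • S + τ • (Matrix.single (0 : Fin (m+1)) (0 : Fin (m+1)) (1:ℂ)) =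
      (2:ℂ) • P' := by
    rw [hS]
    module
  have e2 : τ • (Matrix.single (0 : Fin (n+1)) (0 : Fin (n+1)) (1:ℂ)) + (2:ℂ) • T =
      (2:ℂ) • Q' := by
    rw [hT]
    module
  rw [e1, e2, Matrix.smul_mul, Matrix.mul_smul, hP', hQ']
  rw [Matrix.add_mul, Matrix.mul_sub, Matrix.smul_mul, Matrix.mul_smul,
    Matrix.one_mul, Matrix.mul_one]
  rw [smul_add, smul_smul, smul_smul]
  norm_num


end TCD

open TCD in
/-- Every derivation of `M_{m,n}(ℂ)` with respect to the triple circle product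
`{A, B, C} = (AB*C + CB*A)/2` is a finite sum of inner derivations
`X ↦ {A, B, X} − {B, A, X}`. -/
theorem triple_circle_derivation_inner (m n : ℕ)
    (δ : Matrix (Fin m) (Fin n) ℂ →ₗ[ℂ] Matrix (Fin m) (Fin n) ℂ)
    (hδ : ∀ A B C : Matrix (Fin m) (Fin n) ℂ,
      δ (tripleCircle A B C) =
        tripleCircle (δ A) B C + tripleCircle A (δ B) C + tripleCircle A B (δ C)) :
    ∃ (k : ℕ) (A B : Fin k → Matrix (Fin m) (Fin n) ℂ),
      ∀ X, δ X = ∑ i, (tripleCircle (A i) (B i) X - tripleCircle (B i) (A i) X) := by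
  rcases m with _ | m
  · refine ⟨0, Fin.elim0, Fin.elim0, fun X => ?_⟩
    have hX : X = 0 := by ext i j; exact i.elim0
    rw [hX, map_zero]
    simp
  rcases n with _ | n
  · refine ⟨0, Fin.elim0, Fin.elim0, fun X => ?_⟩
    have hX : X = 0 := by ext i j; exact j.elim0
    rw [hX, map_zero]
    simp
  obtain ⟨P, Q, hPs, hQs, hPQ⟩ := TCD.exists_PQ δ (fun A B C => hδ A B C)
  obtain ⟨k, A, B, hk⟩ := TCD.repr_lemma P Q hPs hQs
  exact ⟨k, A, B, fun X => by rw [hPQ X]; exact hk X⟩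
end

section
/- (Zalar) Let H and K be complex Hilbert spaces and let W ⊆ B(H, K) be a ternary ring of operators (a norm-closed linear subspace with xy*z ∈ W whenever x, y, z ∈ W) which contains all compact operators from H to K. If D : W → W is a linear map which is a derivation with respect to the associative triple product, i.e., D(xy*z) = D(x)y*z + xD(y)*z + xy*D(z) for all x, y, z ∈ W, then there exist a ∈ B(K) with a* = −a and b ∈ B(H) with b* = −b such that D(x) = ax + xb for all x ∈ W. -/
open ContinuousLinearMap Filter Topology
set_option linter.unusedSectionVars false
set_option maxHeartbeats 1000000
set_option synthInstance.maxHeartbeats 400000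

noncomputable section
namespace ZalarAux

variable {H K : Type*}
  [NormedAddCommGroup H] [InnerProductSpace ℂ H] [CompleteSpace H]
  [NormedAddCommGroup K] [InnerProductSpace ℂ K] [CompleteSpace K]

/-- rank one operator `v ↦ ⟪h,v⟫ • k`. -/
def rk (k : K) (h : H) : H →L[ℂ] K :=
  (ContinuousLinearMap.toSpanSingleton ℂ k).comp (innerSL ℂ h)

@[simp] lemma rk_apply (k : K) (h v : H) : rk k h v = (inner ℂ h v : ℂ) • k := rfl

lemma rk_norm_le (k : K) (h : H) : ‖rk k h‖ ≤ ‖k‖ * ‖h‖ := by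
  refine opNorm_le_bound _ (by positivity) fun v => ?_
  rw [rk_apply, norm_smul]
  calc ‖(inner ℂ h v : ℂ)‖ * ‖k‖ ≤ (‖h‖ * ‖v‖) * ‖k‖ := by
        gcongr; exact norm_inner_le_norm h v
    _ = ‖k‖ * ‖h‖ * ‖v‖ := by ring

lemma rk_compact (k : K) (h : H) : IsCompactOperator (rk k h) := by
  refine ⟨(fun c : ℂ => c • k) '' Metric.closedBall 0 ‖h‖, ?_, ?_⟩
  · exact ((isCompact_closedBall 0 ‖h‖).image (by continuity))
  · have : Metric.ball (0 : H) 1 ⊆ rk k h ⁻¹' ((fun c : ℂ => c • k) '' Metric.closedBall 0 ‖h‖) := by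
      intro v hv
      refine ⟨inner ℂ h v, ?_, rfl⟩
      simp only [Metric.mem_closedBall, dist_zero_right]
      calc ‖(inner ℂ h v : ℂ)‖ ≤ ‖h‖ * ‖v‖ := norm_inner_le_norm h v
        _ ≤ ‖h‖ * 1 := by gcongr; exact le_of_lt (by simpa using hv)
        _ = ‖h‖ := mul_one _
    exact Filter.mem_of_superset (Metric.ball_mem_nhds 0 one_pos) this

lemma adjoint_rk (k : K) (h : H) : adjoint (rk k h) = rk h k := by
  symm
  rw [eq_adjoint_iff]
  intro x y
  simp only [rk_apply, inner_smul_left, inner_smul_right, inner_conj_symm]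
  ring

@[simp] lemma rk_add_left (k k' : K) (h : H) : rk (k + k') h = rk k h + rk k' h := by
  ext v; simp [smul_add]

@[simp] lemma rk_smul_left (c : ℂ) (k : K) (h : H) : rk (c • k) h = c • rk k h := by
  ext v
  simp only [rk_apply, ContinuousLinearMap.smul_apply]
  rw [smul_comm]

@[simp] lemma rk_add_right (k : K) (h h' : H) : rk k (h + h') = rk k h + rk k h' := by
  ext v; simp [inner_add_left, add_smul]

@[simp] lemma rk_smul_right (c : ℂ) (k : K) (h : H) :
    rk k (c • h) = (starRingEnd ℂ c) • rk k h := by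
  ext v
  simp only [rk_apply, ContinuousLinearMap.smul_apply, inner_smul_left]
  rw [smul_smul]

/-- the key triple product computation for rank one outer factors. -/
lemma triple_rk (k₁ : K) (h₁ : H) (y : H →L[ℂ] K) (k₂ : K) (h₂ : H) :
    (rk k₁ h₁).comp ((adjoint y).comp (rk k₂ h₂)) =
      (inner ℂ h₁ (adjoint y k₂) : ℂ) • rk k₁ h₂ := by
  ext v
  simp only [comp_apply, rk_apply, ContinuousLinearMap.smul_apply, map_smul,
    inner_smul_right, smul_smul]
  ring_nf

section Main

variable (W : Submodule ℂ (H →L[ℂ] K)) (hcompact : ∀ T : H →L[ℂ] K, IsCompactOperator T → T ∈ W)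

/-- rank one operators, as elements of `W`. -/
def wrk (k : K) (h : H) : W := ⟨rk k h, hcompact _ (rk_compact k h)⟩

@[simp] lemma wrk_coe (k : K) (h : H) :
    ((wrk W hcompact k h : W) : H →L[ℂ] K) = rk k h := rfl

theorem main (hcompact : ∀ T : H →L[ℂ] K, IsCompactOperator T → T ∈ W)
    (hclosed : IsClosed (W : Set (H →L[ℂ] K)))
    (htriple : ∀ x y z : H →L[ℂ] K, x ∈ W → y ∈ W → z ∈ W →
      x.comp ((ContinuousLinearMap.adjoint y).comp z) ∈ W)
    (D : W →ₗ[ℂ] W)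
    (hD : ∀ x y z : W,
      (D ⟨(x : H →L[ℂ] K).comp ((ContinuousLinearMap.adjoint (y : H →L[ℂ] K)).comp
          (z : H →L[ℂ] K)), htriple x y z x.2 y.2 z.2⟩ : H →L[ℂ] K) =
        (D x : H →L[ℂ] K).comp ((ContinuousLinearMap.adjoint (y : H →L[ℂ] K)).comp
          (z : H →L[ℂ] K)) +
        (x : H →L[ℂ] K).comp ((ContinuousLinearMap.adjoint (D y : H →L[ℂ] K)).comp
          (z : H →L[ℂ] K)) +
        (x : H →L[ℂ] K).comp ((ContinuousLinearMap.adjoint (y : H →L[ℂ] K)).comp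
          (D z : H →L[ℂ] K)))
    (p : H) (q : K) (hp : ‖p‖ = 1) (hq : ‖q‖ = 1) :
    ∃ (a : K →L[ℂ] K) (b : H →L[ℂ] H),
      ContinuousLinearMap.adjoint a = -a ∧ ContinuousLinearMap.adjoint b = -b ∧
      ∀ x : W, (D x : H →L[ℂ] K) = a.comp (x : H →L[ℂ] K) + (x : H →L[ℂ] K).comp b := by
  haveI : CompleteSpace W := hclosed.completeSpace_coe
  have hp' : (inner ℂ p p : ℂ) = 1 := by
    rw [inner_self_eq_norm_sq_to_K, hp]; norm_num
  have hq' : (inner ℂ q q : ℂ) = 1 := by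
    rw [inner_self_eq_norm_sq_to_K, hq]; norm_num
  set e : W := wrk W hcompact q p with he
  -- the scalarized derivation identity
  have scalar : ∀ (y : W) (h : H) (k : K),
      (inner ℂ h (adjoint (y : H →L[ℂ] K) k) : ℂ) * inner ℂ q ((D e : H →L[ℂ] K) p) =
        inner ℂ q ((D (wrk W hcompact q h) : H →L[ℂ] K) (adjoint (y : H →L[ℂ] K) k)) +
        inner ℂ h (adjoint (D y : H →L[ℂ] K) k) +
        inner ℂ h (adjoint (y : H →L[ℂ] K) ((D (wrk W hcompact k p) : H →L[ℂ] K) p)) := by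
    intro y h k
    have e1 : (⟨((wrk W hcompact q h : W) : H →L[ℂ] K).comp
        ((adjoint ((y : W) : H →L[ℂ] K)).comp ((wrk W hcompact k p : W) : H →L[ℂ] K)),
        htriple _ _ _ (wrk W hcompact q h).2 y.2 (wrk W hcompact k p).2⟩ : W)
        = (inner ℂ h (adjoint (y : H →L[ℂ] K) k) : ℂ) • e := by
      refine Subtype.ext ?_
      push_cast
      rw [wrk_coe, wrk_coe, triple_rk]
      rfl
    have h1 := hD (wrk W hcompact q h) y (wrk W hcompact k p)
    rw [e1, map_smul] at h1
    have h2 := congrArg (fun T : H →L[ℂ] K => (inner ℂ q (T p) : ℂ)) h1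
    simp only [Submodule.coe_smul, ContinuousLinearMap.smul_apply, inner_smul_right,
      ContinuousLinearMap.add_apply, ContinuousLinearMap.comp_apply, wrk_coe, rk_apply,
      inner_add_right, hp', hq', one_smul, map_smul, mul_one] at h2
    simpa using h2
  -- automatic continuity of D, via the closed graph theorem
  have hDcont : Continuous D := by
    refine LinearMap.continuous_of_seq_closed_graph (𝕜 := ℂ) (E := W) (F := W) (g := D) ?_
    intro u x y hu hDu
    have hv : Tendsto (fun n => u n - x) atTop (𝓝 0) := by
      simpa using hu.sub_const x
    have hvc : Tendsto (fun n => ((u n - x : W) : H →L[ℂ] K)) atTop (𝓝 0) := by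
      have := (continuous_subtype_val.tendsto (0 : W)).comp hv
      simpa [Function.comp_def] using this
    have hvn : Tendsto (fun n => ‖((u n - x : W) : H →L[ℂ] K)‖) atTop (𝓝 0) := by
      simpa using hvc.norm
    have hDv : Tendsto (fun n => D (u n - x)) atTop (𝓝 (y - D x)) := by
      have : (fun n => D (u n - x)) = fun n => D (u n) - D x := by
        funext n; rw [map_sub]
      rw [this]
      exact hDu.sub_const (D x)
    have hDvc : Tendsto (fun n => ((D (u n - x) : W) : H →L[ℂ] K)) atTop
        (𝓝 ((y - D x : W) : H →L[ℂ] K)) :=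
      (continuous_subtype_val.tendsto _).comp hDv
    have hDvn : Tendsto (fun n => ‖((D (u n - x) : W) : H →L[ℂ] K) -
        ((y - D x : W) : H →L[ℂ] K)‖) atTop (𝓝 0) := by
      simpa using (tendsto_sub_nhds_zero_iff.mpr hDvc).norm
    have key : ∀ (h : H) (k : K),
        (inner ℂ h (adjoint ((y - D x : W) : H →L[ℂ] K) k) : ℂ) = 0 := by
      intro h k
      have ht : Tendsto (fun n => (inner ℂ h (adjoint ((D (u n - x) : W) : H →L[ℂ] K) k) : ℂ))
          atTop (𝓝 (inner ℂ h (adjoint ((y - D x : W) : H →L[ℂ] K) k))) := by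
        rw [← tendsto_sub_nhds_zero_iff]
        apply squeeze_zero_norm (a := fun n => ‖h‖ * (‖((D (u n - x) : W) : H →L[ℂ] K) -
          ((y - D x : W) : H →L[ℂ] K)‖ * ‖k‖))
        · intro n
          have : (inner ℂ h (adjoint ((D (u n - x) : W) : H →L[ℂ] K) k) : ℂ) -
              inner ℂ h (adjoint ((y - D x : W) : H →L[ℂ] K) k) =
              inner ℂ h (adjoint (((D (u n - x) : W) : H →L[ℂ] K) -
                ((y - D x : W) : H →L[ℂ] K)) k) := by
            rw [map_sub]
            simp [inner_sub_right]
          rw [this]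
          calc ‖(inner ℂ h (adjoint (((D (u n - x) : W) : H →L[ℂ] K) -
                ((y - D x : W) : H →L[ℂ] K)) k) : ℂ)‖
              ≤ ‖h‖ * ‖adjoint (((D (u n - x) : W) : H →L[ℂ] K) -
                ((y - D x : W) : H →L[ℂ] K)) k‖ := norm_inner_le_norm _ _
            _ ≤ ‖h‖ * (‖adjoint (((D (u n - x) : W) : H →L[ℂ] K) -
                ((y - D x : W) : H →L[ℂ] K))‖ * ‖k‖) := by
                gcongr; exact le_opNorm _ _
            _ = ‖h‖ * (‖((D (u n - x) : W) : H →L[ℂ] K) -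
                ((y - D x : W) : H →L[ℂ] K)‖ * ‖k‖) := by
                rw [LinearIsometryEquiv.norm_map]
        · simpa using (hDvn.mul_const ‖k‖).const_mul ‖h‖
      have ht0 : Tendsto (fun n => (inner ℂ h (adjoint ((D (u n - x) : W) : H →L[ℂ] K) k) : ℂ))
          atTop (𝓝 0) := by
        have heq : ∀ n, (inner ℂ h (adjoint ((D (u n - x) : W) : H →L[ℂ] K) k) : ℂ)
            = (inner ℂ h (adjoint ((u n - x : W) : H →L[ℂ] K) k) : ℂ) *
                inner ℂ q ((D e : H →L[ℂ] K) p)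
              - inner ℂ q ((D (wrk W hcompact q h) : H →L[ℂ] K)
                  (adjoint ((u n - x : W) : H →L[ℂ] K) k))
              - inner ℂ h (adjoint ((u n - x : W) : H →L[ℂ] K)
                  ((D (wrk W hcompact k p) : H →L[ℂ] K) p)) := by
          intro n
          have := scalar (u n - x) h k
          linear_combination -this
        rw [funext heq]
        have l1 : Tendsto (fun n => (inner ℂ h (adjoint ((u n - x : W) : H →L[ℂ] K) k) : ℂ) *
            inner ℂ q ((D e : H →L[ℂ] K) p)) atTop (𝓝 0) := by
          apply squeeze_zero_norm (a := fun n =>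
            ‖h‖ * ‖((u n - x : W) : H →L[ℂ] K)‖ * ‖k‖ * ‖(inner ℂ q ((D e : H →L[ℂ] K) p) : ℂ)‖)
          · intro n
            rw [norm_mul]
            gcongr
            calc ‖(inner ℂ h (adjoint ((u n - x : W) : H →L[ℂ] K) k) : ℂ)‖
                ≤ ‖h‖ * ‖adjoint ((u n - x : W) : H →L[ℂ] K) k‖ := norm_inner_le_norm _ _
              _ ≤ ‖h‖ * (‖adjoint ((u n - x : W) : H →L[ℂ] K)‖ * ‖k‖) := by
                  gcongr; exact le_opNorm _ _
              _ = ‖h‖ * ‖((u n - x : W) : H →L[ℂ] K)‖ * ‖k‖ := by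
                  rw [LinearIsometryEquiv.norm_map]; ring
          · have := ((hvn.const_mul ‖h‖).mul_const ‖k‖).mul_const
              ‖(inner ℂ q ((D e : H →L[ℂ] K) p) : ℂ)‖
            simpa using this
        have l2 : Tendsto (fun n => (inner ℂ q ((D (wrk W hcompact q h) : H →L[ℂ] K)
            (adjoint ((u n - x : W) : H →L[ℂ] K) k)) : ℂ)) atTop (𝓝 0) := by
          apply squeeze_zero_norm (a := fun n =>
            ‖q‖ * (‖(D (wrk W hcompact q h) : H →L[ℂ] K)‖ *
              (‖((u n - x : W) : H →L[ℂ] K)‖ * ‖k‖)))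
          · intro n
            calc ‖(inner ℂ q ((D (wrk W hcompact q h) : H →L[ℂ] K)
                  (adjoint ((u n - x : W) : H →L[ℂ] K) k)) : ℂ)‖
                ≤ ‖q‖ * ‖(D (wrk W hcompact q h) : H →L[ℂ] K)
                    (adjoint ((u n - x : W) : H →L[ℂ] K) k)‖ := norm_inner_le_norm _ _
              _ ≤ ‖q‖ * (‖(D (wrk W hcompact q h) : H →L[ℂ] K)‖ *
                    ‖adjoint ((u n - x : W) : H →L[ℂ] K) k‖) := by
                  gcongr; exact le_opNorm _ _
              _ ≤ ‖q‖ * (‖(D (wrk W hcompact q h) : H →L[ℂ] K)‖ *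
                    (‖adjoint ((u n - x : W) : H →L[ℂ] K)‖ * ‖k‖)) := by
                  gcongr; exact le_opNorm _ _
              _ = ‖q‖ * (‖(D (wrk W hcompact q h) : H →L[ℂ] K)‖ *
                    (‖((u n - x : W) : H →L[ℂ] K)‖ * ‖k‖)) := by
                  rw [LinearIsometryEquiv.norm_map]
          · have := (((hvn.mul_const ‖k‖).const_mul
              ‖(D (wrk W hcompact q h) : H →L[ℂ] K)‖).const_mul ‖q‖)
            simpa using this
        have l3 : Tendsto (fun n => (inner ℂ h (adjoint ((u n - x : W) : H →L[ℂ] K)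
            ((D (wrk W hcompact k p) : H →L[ℂ] K) p)) : ℂ)) atTop (𝓝 0) := by
          apply squeeze_zero_norm (a := fun n =>
            ‖h‖ * (‖((u n - x : W) : H →L[ℂ] K)‖ *
              ‖(D (wrk W hcompact k p) : H →L[ℂ] K) p‖))
          · intro n
            calc ‖(inner ℂ h (adjoint ((u n - x : W) : H →L[ℂ] K)
                  ((D (wrk W hcompact k p) : H →L[ℂ] K) p)) : ℂ)‖
                ≤ ‖h‖ * ‖adjoint ((u n - x : W) : H →L[ℂ] K)
                    ((D (wrk W hcompact k p) : H →L[ℂ] K) p)‖ := norm_inner_le_norm _ _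
              _ ≤ ‖h‖ * (‖adjoint ((u n - x : W) : H →L[ℂ] K)‖ *
                    ‖(D (wrk W hcompact k p) : H →L[ℂ] K) p‖) := by
                  gcongr; exact le_opNorm _ _
              _ = ‖h‖ * (‖((u n - x : W) : H →L[ℂ] K)‖ *
                    ‖(D (wrk W hcompact k p) : H →L[ℂ] K) p‖) := by
                  rw [LinearIsometryEquiv.norm_map]
          · have := ((hvn.mul_const
              ‖(D (wrk W hcompact k p) : H →L[ℂ] K) p‖).const_mul ‖h‖)
            simpa using this
        have := (l1.sub l2).sub l3
        simpa using this
      exact tendsto_nhds_unique ht ht0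
    have hzero : ((y - D x : W) : H →L[ℂ] K) = 0 := by
      ext h
      refine ext_inner_right ℂ fun k => ?_
      have := key h k
      rw [adjoint_inner_right] at this
      simpa using this
    have : y - D x = 0 := Subtype.ext (by simpa using hzero)
    exact sub_eq_zero.mp this
  let Dc : W →L[ℂ] W := ⟨D, hDcont⟩
  letI : Norm (W →L[ℂ] W) := @ContinuousLinearMap.hasOpNorm ℂ ℂ W W _ _ _ _ _ _ _
  have hDle : ∀ x : W, ‖(D x : H →L[ℂ] K)‖ ≤ ‖Dc‖ * ‖(x : H →L[ℂ] K)‖ := fun x => by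
    have h := @ContinuousLinearMap.le_opNorm ℂ ℂ W W _ _ _ _ _ _ _ _ Dc x
    rw [Submodule.coe_norm, Submodule.coe_norm] at h
    exact h
  have hDc0 : 0 ≤ ‖Dc‖ := by
    have h := @ContinuousLinearMap.opNorm_nonneg ℂ ℂ W W _ _ _ _ _ _ _ Dc
    exact h
  -- the bounded operator A
  obtain ⟨A, hA⟩ : ∃ A : K →L[ℂ] K, ∀ k : K,
      A k = ((D (wrk W hcompact k p)) : H →L[ℂ] K) p := by
    have hadd : ∀ k k' : K, ((D (wrk W hcompact (k + k') p)) : H →L[ℂ] K) p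
        = ((D (wrk W hcompact k p)) : H →L[ℂ] K) p +
          ((D (wrk W hcompact k' p)) : H →L[ℂ] K) p := by
      intro k k'
      have : wrk W hcompact (k + k') p = wrk W hcompact k p + wrk W hcompact k' p :=
        Subtype.ext (by simp)
      rw [this, map_add]
      rfl
    have hsmul : ∀ (c : ℂ) (k : K), ((D (wrk W hcompact (c • k) p)) : H →L[ℂ] K) p
        = c • ((D (wrk W hcompact k p)) : H →L[ℂ] K) p := by
      intro c k
      have : wrk W hcompact (c • k) p = c • wrk W hcompact k p :=
        Subtype.ext (by simp)
      rw [this, map_smul]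
      rfl
    refine ⟨LinearMap.mkContinuous
      ⟨⟨fun k => ((D (wrk W hcompact k p)) : H →L[ℂ] K) p, hadd⟩, hsmul⟩ ‖Dc‖ ?_, fun k => rfl⟩
    intro k
    calc ‖((D (wrk W hcompact k p)) : H →L[ℂ] K) p‖
        ≤ ‖((D (wrk W hcompact k p)) : H →L[ℂ] K)‖ * ‖p‖ := le_opNorm _ _
      _ = ‖((D (wrk W hcompact k p)) : H →L[ℂ] K)‖ := by rw [hp, mul_one]
      _ ≤ ‖Dc‖ * ‖rk k p‖ := hDle _
      _ ≤ ‖Dc‖ * (‖k‖ * ‖p‖) := by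
          have := rk_norm_le k p
          gcongr
      _ = ‖Dc‖ * ‖k‖ := by rw [hp, mul_one]
  -- the bounded operator B
  obtain ⟨B, hB⟩ : ∃ B : H →L[ℂ] H, ∀ h : H,
      B h = adjoint ((D (wrk W hcompact q h)) : H →L[ℂ] K) q := by
    have hadd : ∀ h h' : H, adjoint ((D (wrk W hcompact q (h + h'))) : H →L[ℂ] K) q
        = adjoint ((D (wrk W hcompact q h)) : H →L[ℂ] K) q +
          adjoint ((D (wrk W hcompact q h')) : H →L[ℂ] K) q := by
      intro h h'
      have : wrk W hcompact q (h + h') = wrk W hcompact q h + wrk W hcompact q h' :=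
        Subtype.ext (by simp)
      rw [this, map_add, Submodule.coe_add, map_add, ContinuousLinearMap.add_apply]
    have hsmul : ∀ (c : ℂ) (h : H), adjoint ((D (wrk W hcompact q (c • h))) : H →L[ℂ] K) q
        = c • adjoint ((D (wrk W hcompact q h)) : H →L[ℂ] K) q := by
      intro c h
      have : wrk W hcompact q (c • h) = (starRingEnd ℂ c) • wrk W hcompact q h :=
        Subtype.ext (by simp)
      rw [this, map_smul, Submodule.coe_smul,
        ContinuousLinearMap.adjoint.map_smulₛₗ (starRingEnd ℂ c),
        ContinuousLinearMap.smul_apply]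
      simp
    refine ⟨LinearMap.mkContinuous
      ⟨⟨fun h => adjoint ((D (wrk W hcompact q h)) : H →L[ℂ] K) q, hadd⟩, hsmul⟩ ‖Dc‖ ?_,
      fun h => rfl⟩
    intro h
    calc ‖adjoint ((D (wrk W hcompact q h)) : H →L[ℂ] K) q‖
        ≤ ‖adjoint ((D (wrk W hcompact q h)) : H →L[ℂ] K)‖ * ‖q‖ := le_opNorm _ _
      _ = ‖((D (wrk W hcompact q h)) : H →L[ℂ] K)‖ := by
          rw [LinearIsometryEquiv.norm_map, hq, mul_one]
      _ ≤ ‖Dc‖ * ‖rk q h‖ := hDle _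
      _ ≤ ‖Dc‖ * (‖q‖ * ‖h‖) := by
          have := rk_norm_le q h
          gcongr
      _ = ‖Dc‖ * ‖h‖ := by rw [hq, one_mul]
  set c₀ : ℂ := inner ℂ q ((D e : H →L[ℂ] K) p) with hc₀
  set a₀ : K →L[ℂ] K := (starRingEnd ℂ c₀) • ContinuousLinearMap.id ℂ K - adjoint A with ha₀
  set b₀ : H →L[ℂ] H := -B with hb₀
  -- the representation formula with a₀, b₀
  have hform : ∀ y : W, (D y : H →L[ℂ] K) =
      a₀.comp (y : H →L[ℂ] K) + (y : H →L[ℂ] K).comp b₀ := by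
    intro y
    ext h
    refine ext_inner_right ℂ fun k => ?_
    have hs := scalar y h k
    rw [← hA] at hs
    have h1 : (inner ℂ q ((D (wrk W hcompact q h) : H →L[ℂ] K)
        (adjoint (y : H →L[ℂ] K) k)) : ℂ)
        = inner ℂ ((y : H →L[ℂ] K) (B h)) k := by
      rw [← adjoint_inner_left ((D (wrk W hcompact q h) : H →L[ℂ] K)), ← hB,
        adjoint_inner_right]
    rw [h1, adjoint_inner_right, adjoint_inner_right, adjoint_inner_right,
      ← adjoint_inner_left A] at hs
    simp only [ha₀, hb₀, ContinuousLinearMap.add_apply, ContinuousLinearMap.comp_apply,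
      ContinuousLinearMap.sub_apply, ContinuousLinearMap.smul_apply,
      ContinuousLinearMap.id_apply, ContinuousLinearMap.neg_apply, inner_add_left,
      inner_sub_left, inner_smul_left, inner_neg_left, Complex.conj_conj, map_neg]
    linear_combination -hs
  -- the skew-symmetrization identity
  have hkey : ∀ (h1 h2 : H) (k2 k3 : K),
      (inner ℂ k2 k3 : ℂ) * inner ℂ h1 ((adjoint b₀ + b₀) h2) +
        (inner ℂ h1 h2 : ℂ) * inner ℂ k2 ((adjoint a₀ + a₀) k3) = 0 := by
    intro h1 h2 k2 k3
    have e1 : (⟨((wrk W hcompact q h1 : W) : H →L[ℂ] K).comp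
        ((adjoint ((wrk W hcompact k2 h2 : W) : H →L[ℂ] K)).comp
          ((wrk W hcompact k3 p : W) : H →L[ℂ] K)),
        htriple _ _ _ (wrk W hcompact q h1).2 (wrk W hcompact k2 h2).2
          (wrk W hcompact k3 p).2⟩ : W)
        = (inner ℂ h1 (adjoint (rk k2 h2) k3) : ℂ) • e := by
      refine Subtype.ext ?_
      push_cast
      rw [wrk_coe, wrk_coe, wrk_coe, triple_rk]
      rfl
    have h1' := hD (wrk W hcompact q h1) (wrk W hcompact k2 h2) (wrk W hcompact k3 p)
    rw [e1, map_smul] at h1'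
    have h2' := congrArg (fun T : H →L[ℂ] K => (inner ℂ q (T p) : ℂ)) h1'
    simp only [Submodule.coe_smul, ContinuousLinearMap.smul_apply, inner_smul_right,
      hform, he, wrk_coe, adjoint_rk, map_add, adjoint_comp, adjoint_adjoint,
      ContinuousLinearMap.add_apply, ContinuousLinearMap.comp_apply, rk_apply,
      inner_add_right, inner_smul_right, hp', hq', one_smul, mul_one, map_smul,
      map_add, adjoint_inner_left, adjoint_inner_right] at h2'
    simp only [ContinuousLinearMap.add_apply, inner_add_right, adjoint_inner_left,
      adjoint_inner_right]
    linear_combination -h2'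
  set μ : ℂ := - inner ℂ q ((adjoint a₀ + a₀) q) with hμ
  have hS : ∀ h2 : H, (adjoint b₀ + b₀) h2 = μ • h2 := by
    intro h2
    refine ext_inner_left ℂ fun h1 => ?_
    have hk := hkey h1 h2 q q
    rw [hq'] at hk
    rw [inner_smul_right]
    linear_combination hk
  have hμp : (inner ℂ p ((adjoint b₀ + b₀) p) : ℂ) = μ := by
    rw [hS p, inner_smul_right, hp', mul_one]
  have hR : ∀ k3 : K, (adjoint a₀ + a₀) k3 = (-μ) • k3 := by
    intro k3
    refine ext_inner_left ℂ fun k2 => ?_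
    have hk := hkey p p k2 k3
    rw [hp', hμp] at hk
    rw [inner_smul_right]
    linear_combination hk
  have hμreal : starRingEnd ℂ μ = μ := by
    have h1 : starRingEnd ℂ (inner ℂ p ((adjoint b₀ + b₀) p) : ℂ)
        = inner ℂ ((adjoint b₀ + b₀) p) p := inner_conj_symm _ _
    have h2 : (inner ℂ ((adjoint b₀ + b₀) p) p : ℂ) = inner ℂ p ((adjoint b₀ + b₀) p) := by
      simp only [ContinuousLinearMap.add_apply, inner_add_left, inner_add_right]
      rw [adjoint_inner_left, ← adjoint_inner_right, add_comm]
    rw [← hμp, h1, h2, hμp]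
  have hconj : starRingEnd ℂ (μ/2) = μ/2 := by
    rw [map_div₀, hμreal]
    norm_num [Complex.conj_ofNat]
  refine ⟨a₀ + (μ/2) • ContinuousLinearMap.id ℂ K,
    b₀ - (μ/2) • ContinuousLinearMap.id ℂ H, ?_, ?_, ?_⟩
  · rw [map_add, ContinuousLinearMap.adjoint.map_smulₛₗ, adjoint_id, hconj]
    ext k
    have hk := hR k
    simp only [ContinuousLinearMap.add_apply, ContinuousLinearMap.smul_apply,
      ContinuousLinearMap.id_apply, ContinuousLinearMap.neg_apply] at hk ⊢
    linear_combination (norm := module) hk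
  · rw [map_sub, ContinuousLinearMap.adjoint.map_smulₛₗ, adjoint_id, hconj]
    ext h
    have hk := hS h
    simp only [ContinuousLinearMap.add_apply, ContinuousLinearMap.sub_apply,
      ContinuousLinearMap.smul_apply, ContinuousLinearMap.id_apply,
      ContinuousLinearMap.neg_apply] at hk ⊢
    linear_combination (norm := module) hk
  · intro x
    rw [hform x]
    simp only [ContinuousLinearMap.add_comp, ContinuousLinearMap.sub_comp,
      ContinuousLinearMap.comp_add, ContinuousLinearMap.comp_sub,
      ContinuousLinearMap.smul_comp, ContinuousLinearMap.comp_smul,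
      ContinuousLinearMap.id_comp, ContinuousLinearMap.comp_id]
    abel

end Main
end ZalarAux
end

/-- (Zalar) If `W ⊆ B(H, K)` is a TRO containing all compact operators and `D : W → W`
is a derivation with respect to the associative triple product `xy*z`, then there exist
skew-adjoint `a ∈ B(K)` and `b ∈ B(H)` with `D x = ax + xb` for all `x ∈ W`. -/
theorem zalar_tro_derivation (H K : Type*)
    [NormedAddCommGroup H] [InnerProductSpace ℂ H] [CompleteSpace H]
    [NormedAddCommGroup K] [InnerProductSpace ℂ K] [CompleteSpace K]
    (W : Submodule ℂ (H →L[ℂ] K)) (hclosed : IsClosed (W : Set (H →L[ℂ] K)))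
    (htriple : ∀ x y z : H →L[ℂ] K, x ∈ W → y ∈ W → z ∈ W →
      x.comp ((ContinuousLinearMap.adjoint y).comp z) ∈ W)
    (hcompact : ∀ T : H →L[ℂ] K, IsCompactOperator T → T ∈ W)
    (D : W →ₗ[ℂ] W)
    (hD : ∀ x y z : W,
      (D ⟨(x : H →L[ℂ] K).comp ((ContinuousLinearMap.adjoint (y : H →L[ℂ] K)).comp
          (z : H →L[ℂ] K)), htriple x y z x.2 y.2 z.2⟩ : H →L[ℂ] K) =
        (D x : H →L[ℂ] K).comp ((ContinuousLinearMap.adjoint (y : H →L[ℂ] K)).comp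
          (z : H →L[ℂ] K)) +
        (x : H →L[ℂ] K).comp ((ContinuousLinearMap.adjoint (D y : H →L[ℂ] K)).comp
          (z : H →L[ℂ] K)) +
        (x : H →L[ℂ] K).comp ((ContinuousLinearMap.adjoint (y : H →L[ℂ] K)).comp
          (D z : H →L[ℂ] K))) :
    ∃ (a : K →L[ℂ] K) (b : H →L[ℂ] H),
      ContinuousLinearMap.adjoint a = -a ∧ ContinuousLinearMap.adjoint b = -b ∧
      ∀ x : W, (D x : H →L[ℂ] K) =
        a.comp (x : H →L[ℂ] K) + (x : H →L[ℂ] K).comp b := by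
  rcases subsingleton_or_nontrivial H with hH | hH
  · refine ⟨0, 0, by simp, by simp, fun x => ?_⟩
    have hz : ∀ T : H →L[ℂ] K, T = 0 := fun T => by
      ext h; rw [Subsingleton.elim h 0, map_zero]; rfl
    rw [hz (D x : H →L[ℂ] K), hz (x : H →L[ℂ] K)]
    simp
  rcases subsingleton_or_nontrivial K with hK | hK
  · refine ⟨0, 0, by simp, by simp, fun x => ?_⟩
    have hz : ∀ T : H →L[ℂ] K, T = 0 := fun T => by
      ext h; exact Subsingleton.elim _ _
    rw [hz (D x : H →L[ℂ] K), hz (x : H →L[ℂ] K)]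
    simp
  obtain ⟨p₀, hp₀⟩ := exists_ne (0 : H)
  obtain ⟨q₀, hq₀⟩ := exists_ne (0 : K)
  exact ZalarAux.main W hcompact hclosed htriple D hD ((‖p₀‖⁻¹ : ℂ) • p₀) ((‖q₀‖⁻¹ : ℂ) • q₀)
    (norm_smul_inv_norm (𝕜 := ℂ) hp₀) (norm_smul_inv_norm (𝕜 := ℂ) hq₀)
end
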